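/- arXiv:1906.06957 — 7 statements merged into one kernel-verified Lean document; each statement's English description precedes it below -/
import Mathlib

section
/- Let 𝕋 = ℝ or ℤ, ν a Borel measure on 𝕋, H_in and H_ob complex Hilbert spaces, k a bounded continuous positive definite kernel on a topological space 𝒳, and (Ω,P) a probability space with a group Θ = {θ_t}_{t∈𝕋} of measure-preserving measurable bijections. For m ∈ ℕ and triples D_i = (L_i, Φ_i, I_i) ∈ 𝒯_k(H_in, H_ob; ν) (i = 1,2), define 𝒦_k^{(m)}(D_1, D_2) := ⋀^m ∫_𝕋 (L_2 K_{Φ_2}^t I_2)^* L_1 K_{Φ_1}^t I_1 dν(t) (a Hilbert–Schmidt operator on ⋀^m H_in). Then 𝒦_k^{(m)} is a B(⋀^m H_in)-valued positive definite kernel on 𝒯_k(H_in, H_ob; ν): 𝒦_k^{(m)}(D_1, D_2) = 𝒦_k^{(m)}(D_2, D_1)^* for all D_1, D_2, and for every finite family D_1,…,D_r ∈ 𝒯_k(H_in, H_ob; ν) and v_1,…,v_r ∈ ⋀^m H_in, ∑_{i,j=1}^r ⟨𝒦_k^{(m)}(D_i, D_j) v_i, v_j⟩_{⋀^m H_in}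 ≥ 0. -/
open MeasureTheory
open scoped ComplexOrder BigOperators

noncomputable section

local notation "⟪" x ", " y "⟫" => @inner ℂ _ _ x y

section AuxLemmas
open Equiv Matrix

lemma key_det_identity {N : Type*} [Fintype N] [DecidableEq N] {m : ℕ}
    (A C : Matrix N (Fin m) ℂ) :
    ∑ κ : Fin m → N,
        (starRingEnd ℂ) (Matrix.det (Matrix.of fun a b => A (κ a) b))
          * Matrix.det (Matrix.of fun a b => C (κ a) b)
      = (m.factorial : ℂ) * Matrix.det (Aᴴ * C) := by
  classical
  have hdetAC : Matrix.det (Aᴴ * C)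
      = ∑ μ : Perm (Fin m), ∑ κ : Fin m → N,
          ((Perm.sign μ : ℤ) : ℂ) *
            ((∏ a, (starRingEnd ℂ) (A (κ a) (μ a))) * ∏ a, C (κ a) a) := by
    rw [Matrix.det_apply']
    refine Finset.sum_congr rfl fun μ _ => ?_
    have h1 : ∀ a : Fin m, (Aᴴ * C) (μ a) a
        = ∑ k, (starRingEnd ℂ) (A k (μ a)) * C k a := by
      intro a
      simp [Matrix.mul_apply, Matrix.conjTranspose_apply]
    calc ((Perm.sign μ : ℤ) : ℂ) * ∏ a, (Aᴴ * C) (μ a) a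
        = ((Perm.sign μ : ℤ) : ℂ) *
            ∏ a, ∑ k, (starRingEnd ℂ) (A k (μ a)) * C k a := by
          simp_rw [h1]
      _ = ((Perm.sign μ : ℤ) : ℂ) * ∑ κ ∈ Fintype.piFinset (fun _ : Fin m => Finset.univ),
            ∏ a, (starRingEnd ℂ) (A (κ a) (μ a)) * C (κ a) a := by
          rw [Finset.prod_univ_sum]
      _ = ∑ κ : Fin m → N, ((Perm.sign μ : ℤ) : ℂ) *
            ((∏ a, (starRingEnd ℂ) (A (κ a) (μ a))) * ∏ a, C (κ a) a) := by
          rw [Fintype.piFinset_univ, Finset.mul_sum]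
          exact Finset.sum_congr rfl fun κ _ => by rw [Finset.prod_mul_distrib]
  -- expand LHS
  have expand : ∀ κ : Fin m → N,
      (starRingEnd ℂ) (Matrix.det (Matrix.of fun a b => A (κ a) b))
          * Matrix.det (Matrix.of fun a b => C (κ a) b)
        = ∑ τ : Perm (Fin m), ∑ σ : Perm (Fin m),
            (((Perm.sign τ : ℤ) : ℂ) * ((Perm.sign σ : ℤ) : ℂ)) *
              ((∏ a, (starRingEnd ℂ) (A (κ (τ a)) a)) * ∏ a, C (κ (σ a)) a) := by
    intro κ
    rw [Matrix.det_apply', Matrix.det_apply', map_sum, Finset.sum_mul_sum]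
    refine Finset.sum_congr rfl fun τ _ => Finset.sum_congr rfl fun σ _ => ?_
    simp only [_root_.map_mul, map_prod, Matrix.of_apply, map_intCast]
    ring
  simp_rw [expand]
  have hflat : ∀ (f : (Fin m → N) → Perm (Fin m) → Perm (Fin m) → ℂ),
      (∑ κ : Fin m → N, ∑ τ : Perm (Fin m), ∑ σ : Perm (Fin m), f κ τ σ)
        = ∑ x : (Fin m → N) × Perm (Fin m) × Perm (Fin m), f x.1 x.2.1 x.2.2 := by
    intro f
    rw [Fintype.sum_prod_type (f := fun x : (Fin m → N) × Perm (Fin m) × Perm (Fin m) =>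
      f x.1 x.2.1 x.2.2)]
    exact Finset.sum_congr rfl fun κ _ =>
      (Fintype.sum_prod_type (f := fun y : Perm (Fin m) × Perm (Fin m) => f κ y.1 y.2)).symm
  rw [hflat]
  set T := (Fin m → N) × Perm (Fin m) × Perm (Fin m)
  let e : T ≃ T :=
    { toFun := fun x => (x.1 ∘ ⇑x.2.2, x.2.1⁻¹ * x.2.2, x.2.2)
      invFun := fun x => (x.1 ∘ ⇑(x.2.2⁻¹), x.2.2 * x.2.1⁻¹, x.2.2)
      left_inv := by
        rintro ⟨κ, τ, σ⟩
        refine Prod.ext ?_ (Prod.ext ?_ rfl)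
        · funext a; simp
        · simp [mul_assoc]
      right_inv := by
        rintro ⟨κ, μ, σ⟩
        refine Prod.ext ?_ (Prod.ext ?_ rfl)
        · funext a; simp
        · simp [mul_assoc] }
  let G : T → ℂ := fun y =>
    ((Perm.sign y.2.1 : ℤ) : ℂ) *
      ((∏ a, (starRingEnd ℂ) (A (y.1 a) (y.2.1 a))) * ∏ a, C (y.1 a) a)
  have hFG : ∀ x : T,
      (((Perm.sign x.2.1 : ℤ) : ℂ) * ((Perm.sign x.2.2 : ℤ) : ℂ)) *
        ((∏ a, (starRingEnd ℂ) (A (x.1 (x.2.1 a)) a)) * ∏ a, C (x.1 (x.2.2 a)) a)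
      = G (e x) := by
    rintro ⟨κ, τ, σ⟩
    show _ = ((Perm.sign (τ⁻¹ * σ) : ℤ) : ℂ) *
      ((∏ a, (starRingEnd ℂ) (A ((κ ∘ σ) a) ((τ⁻¹ * σ) a))) * ∏ a, C ((κ ∘ σ) a) a)
    have hsign : ((Perm.sign (τ⁻¹ * σ) : ℤ) : ℂ)
        = ((Perm.sign τ : ℤ) : ℂ) * ((Perm.sign σ : ℤ) : ℂ) := by
      rw [Equiv.Perm.sign_mul, Equiv.Perm.sign_inv]
      push_cast
      ring
    have hprod : ∏ a, (starRingEnd ℂ) (A (κ (τ a)) a)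
        = ∏ a, (starRingEnd ℂ) (A ((κ ∘ σ) a) ((τ⁻¹ * σ) a)) := by
      rw [← Equiv.prod_comp (σ⁻¹ * τ)
        (fun a => (starRingEnd ℂ) (A ((κ ∘ σ) a) ((τ⁻¹ * σ) a)))]
      refine Finset.prod_congr rfl fun a _ => ?_
      simp [Equiv.Perm.mul_apply]
    have hprod2 : ∏ a, C (κ (σ a)) a = ∏ a, C ((κ ∘ σ) a) a := rfl
    rw [← hprod, hprod2, hsign]
  calc ∑ x : T, (((Perm.sign x.2.1 : ℤ) : ℂ) * ((Perm.sign x.2.2 : ℤ) : ℂ)) *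
        ((∏ a, (starRingEnd ℂ) (A (x.1 (x.2.1 a)) a)) * ∏ a, C (x.1 (x.2.2 a)) a)
      = ∑ x : T, G (e x) := Finset.sum_congr rfl fun x _ => hFG x
    _ = ∑ y : T, G y := Equiv.sum_comp e G
    _ = (m.factorial : ℂ) * Matrix.det (Aᴴ * C) := by
        rw [← hflat fun κ μ σ => ((Perm.sign μ : ℤ) : ℂ) *
          ((∏ a, (starRingEnd ℂ) (A (κ a) (μ a))) * ∏ a, C (κ a) a)]
        rw [hdetAC, Finset.mul_sum, Finset.sum_comm]
        refine Finset.sum_congr rfl fun μ _ => ?_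
        rw [Finset.mul_sum]
        refine Finset.sum_congr rfl fun κ _ => ?_
        simp [Finset.sum_const, Finset.card_univ, Fintype.card_perm, Fintype.card_fin]

lemma conj_mul_self_nonneg' (z : ℂ) : 0 ≤ (starRingEnd ℂ) z * z := by
  rw [mul_comm, Complex.mul_conj, Complex.nonneg_iff]
  simp [Complex.normSq_nonneg]

lemma nonneg_of_natCast_mul' {z : ℂ} (n : ℕ) (hn : 0 < n) (h : 0 ≤ (n : ℂ) * z) : 0 ≤ z := by
  rw [Complex.nonneg_iff] at h ⊢
  have hre : ((n : ℂ) * z).re = (n : ℝ) * z.re := by simp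
  have him : ((n : ℂ) * z).im = (n : ℝ) * z.im := by simp
  rw [hre, him] at h
  have hn' : (0 : ℝ) < n := by exact_mod_cast hn
  constructor
  · nlinarith [h.1]
  · rcases mul_eq_zero.mp h.2.symm with h' | h'
    · exact absurd h' (by positivity)
    · exact h'.symm

lemma inner_self_nonneg'' {E : Type*} [NormedAddCommGroup E] [InnerProductSpace ℂ E]
    (y : E) : 0 ≤ ⟪y, y⟫ := by
  rw [Complex.nonneg_iff]
  constructor
  · have h := inner_self_nonneg (𝕜 := ℂ) (x := y)
    rwa [← RCLike.re_eq_complex_re]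
  · have h := inner_self_im (𝕜 := ℂ) y
    rw [← RCLike.im_eq_complex_im]
    exact h.symm

lemma det_gram_nonneg {E : Type*} [NormedAddCommGroup E] [InnerProductSpace ℂ E]
    {ι : Type*} [Fintype ι] [DecidableEq ι] {m : ℕ} (g : ι → Fin m → E) (c : ι → ℂ) :
    0 ≤ ∑ β, ∑ α, (starRingEnd ℂ) (c β) * c α *
        Matrix.det (Matrix.of fun a b => ⟪g β a, g α b⟫) := by
  classical
  set G : Matrix (ι × Fin m) (ι × Fin m) ℂ :=
    Matrix.of (fun p q => ⟪g p.1 p.2, g q.1 q.2⟫) with hGdef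
  have hpsd : G.PosSemidef := by
    rw [Matrix.posSemidef_iff_dotProduct_mulVec]
    constructor
    · ext p q
      simp only [hGdef, Matrix.conjTranspose_apply, Matrix.of_apply]
      exact inner_conj_symm _ _
    · intro x
      have hexp : dotProduct (star x) (G *ᵥ x)
          = ⟪∑ p, x p • g p.1 p.2, ∑ q, x q • g q.1 q.2⟫ := by
        simp only [sum_inner, inner_sum, inner_smul_left, inner_smul_right,
          dotProduct, Matrix.mulVec, Pi.star_apply, hGdef, Matrix.of_apply,
          RCLike.star_def]
        simp_rw [Finset.mul_sum]
        conv_lhs => rw [Finset.sum_comm]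
        refine Finset.sum_congr rfl fun p _ => Finset.sum_congr rfl fun q _ => by ring
      rw [hexp]
      exact inner_self_nonneg'' _
  obtain ⟨B, hB⟩ : ∃ B : Matrix (ι × Fin m) (ι × Fin m) ℂ, G = Bᴴ * B := by
    open scoped MatrixOrder in
    exact CStarAlgebra.nonneg_iff_eq_star_mul_self.mp hpsd.nonneg
  set Amat : ι → Matrix (ι × Fin m) (Fin m) ℂ :=
    fun α => Matrix.of fun k a => B k (α, a) with hAmat
  have hM : ∀ β α, (Matrix.of fun a b => ⟪g β a, g α b⟫) = (Amat β)ᴴ * (Amat α) := by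
    intro β α
    ext a b
    have h1 : G (β, a) (α, b) = ((Bᴴ * B) : Matrix _ _ ℂ) (β, a) (α, b) := by rw [← hB]
    simp only [hGdef, Matrix.of_apply, Matrix.mul_apply, Matrix.conjTranspose_apply] at h1 ⊢
    simpa [hAmat] using h1
  set Dd : ι → (Fin m → ι × Fin m) → ℂ :=
    fun α κ => Matrix.det (Matrix.of fun a b => Amat α (κ a) b) with hDd
  have hkey : ∀ β α, (m.factorial : ℂ) * Matrix.det (Matrix.of fun a b => ⟪g β a, g α b⟫)
      = ∑ κ : Fin m → ι × Fin m, (starRingEnd ℂ) (Dd β κ) * Dd α κ := by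
    intro β α
    rw [hM β α]
    exact (key_det_identity (Amat β) (Amat α)).symm
  apply nonneg_of_natCast_mul' m.factorial m.factorial_pos
  have h1 : ∀ β α, (m.factorial : ℂ) *
        ((starRingEnd ℂ) (c β) * c α * Matrix.det (Matrix.of fun a b => ⟪g β a, g α b⟫))
      = ∑ κ : Fin m → ι × Fin m,
          (starRingEnd ℂ) (c β * Dd β κ) * (c α * Dd α κ) := by
    intro β α
    have : (m.factorial : ℂ) *
        ((starRingEnd ℂ) (c β) * c α * Matrix.det (Matrix.of fun a b => ⟪g β a, g α b⟫))
        = (starRingEnd ℂ) (c β) * c α *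
          ((m.factorial : ℂ) * Matrix.det (Matrix.of fun a b => ⟪g β a, g α b⟫)) := by ring
    rw [this, hkey β α, Finset.mul_sum]
    refine Finset.sum_congr rfl fun κ _ => ?_
    simp only [_root_.map_mul]
    ring
  calc (m.factorial : ℂ) * ∑ β, ∑ α, (starRingEnd ℂ) (c β) * c α *
        Matrix.det (Matrix.of fun a b => ⟪g β a, g α b⟫)
      = ∑ β, ∑ α, ∑ κ : Fin m → ι × Fin m,
          (starRingEnd ℂ) (c β * Dd β κ) * (c α * Dd α κ) := by
        rw [Finset.mul_sum]
        refine Finset.sum_congr rfl fun β _ => ?_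
        rw [Finset.mul_sum]
        exact Finset.sum_congr rfl fun α _ => h1 β α
    _ = ∑ κ : Fin m → ι × Fin m,
          (starRingEnd ℂ) (∑ β, c β * Dd β κ) * (∑ α, c α * Dd α κ) := by
        have e1 : ∀ β : ι, (∑ α, ∑ κ : Fin m → ι × Fin m,
              (starRingEnd ℂ) (c β * Dd β κ) * (c α * Dd α κ))
            = ∑ κ : Fin m → ι × Fin m, ∑ α,
              (starRingEnd ℂ) (c β * Dd β κ) * (c α * Dd α κ) := fun β =>
          Finset.sum_comm
        simp_rw [e1]
        rw [Finset.sum_comm]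
        refine Finset.sum_congr rfl fun κ _ => ?_
        rw [map_sum, Finset.sum_mul_sum]
    _ ≥ 0 := Finset.sum_nonneg fun κ _ => conj_mul_self_nonneg' _

end AuxLemmas

/-- A (ℂ-valued) positive definite kernel on a set. -/
def IsPosDefKernel {𝒳 : Type*} (k : 𝒳 → 𝒳 → ℂ) : Prop :=
  (∀ x y, k x y = (starRingEnd ℂ) (k y x)) ∧
  ∀ (n : ℕ) (x : Fin n → 𝒳) (c : Fin n → ℂ),
    0 ≤ ∑ i, ∑ j, c i * (starRingEnd ℂ) (c j) * k (x i) (x j)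

/-- A linear map between inner product spaces is Hilbert–Schmidt if the sums
`∑ ‖A e_i‖²` over finite orthonormal families are uniformly bounded. -/
def IsHilbertSchmidt {E F : Type*} [NormedAddCommGroup E] [InnerProductSpace ℂ E]
    [NormedAddCommGroup F] [InnerProductSpace ℂ F] (A : E →ₗ[ℂ] F) : Prop :=
  ∃ C : ℝ, ∀ (n : ℕ) (e : Fin n → E), Orthonormal ℂ e → ∑ i, ‖A (e i)‖ ^ 2 ≤ C

/-- A triple `D = (L, Φ, I) ∈ 𝒯_k(H_in, H_ob; ν)`: a random dynamical system `Φ` on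
some `ℳ ⊂ 𝒳` with respect to `θ`, together with its (well-defined)
Perron–Frobenius operators `K_Φ^t` on the vvRKHS (`K_Φ^t 𝐤_{𝛗(s,x)} h =
𝐤_{𝛗(t+s,x)} h`), an initial value operator `I : H_in → H_{𝐤,Φ}` and an observable
operator `L` (defined on `H_{𝐤,Φ}`, here extended to all of `H_𝐤`), such that
`L K_Φ^t I` is Hilbert–Schmidt for all `t` and `t ↦ ‖L K_Φ^t I v‖ ∈ L²(𝕋,ν)`. -/
structure RDSTriple {𝕋 Ω 𝒳 HK : Type*} [AddCommGroup 𝕋] [MeasurableSpace 𝕋]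
    [MeasurableSpace Ω] [TopologicalSpace 𝒳] [MeasurableSpace 𝒳]
    [NormedAddCommGroup HK] [InnerProductSpace ℂ HK]
    {P : Measure Ω} (θ : 𝕋 → Ω → Ω)
    (feat : (Ω → 𝒳) → Lp ℂ 2 P → HK)
    (Hin Hob : Type*) [NormedAddCommGroup Hin] [InnerProductSpace ℂ Hin]
    [NormedAddCommGroup Hob] [InnerProductSpace ℂ Hob]
    (ν : Measure 𝕋) where
  /-- the domain `ℳ ⊂ 𝒳` of the random dynamical system -/
  M : Set 𝒳
  /-- the random dynamical system -/
  Φ : 𝕋 → Ω → 𝒳 → 𝒳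
  maps_mem : ∀ t ω x, x ∈ M → Φ t ω x ∈ M
  measurable : Measurable fun p : 𝕋 × Ω × M => Φ p.1 p.2.1 (p.2.2 : 𝒳)
  init : ∀ ω x, x ∈ M → Φ 0 ω x = x
  cocycle : ∀ t s ω x, x ∈ M → Φ (t + s) ω x = Φ t (θ s ω) (Φ s ω x)
  /-- the Perron–Frobenius operators `K_Φ^t` of `Φ`, assumed well defined -/
  K : 𝕋 → HK →ₗ[ℂ] HK
  hK : ∀ (t s : 𝕋) (x : 𝒳), x ∈ M → ∀ h : Lp ℂ 2 P,
    K t (feat (fun ω => Φ s (θ (-s) ω) x) h)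
      = feat (fun ω => Φ (t + s) (θ (-(t + s)) ω) x) h
  /-- the initial value operator, with values in `H_{𝐤,Φ}` -/
  I : Hin →ₗ[ℂ] HK
  hI : ∀ v, I v ∈ (Submodule.span ℂ
      {g : HK | ∃ (s : 𝕋) (x : 𝒳) (h : Lp ℂ 2 P), x ∈ M ∧
        g = feat (fun ω => Φ s (θ (-s) ω) x) h}).topologicalClosure
  /-- the observable operator -/
  L : HK →ₗ[ℂ] Hob
  hHS : ∀ t : 𝕋, IsHilbertSchmidt ((L.comp (K t)).comp I)
  hL2 : ∀ v : Hin, MemLp (fun t => L ((K t) (I v))) 2 ν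

/-- With `𝒦_k^{(m)}(D₁,D₂) := ⋀^m ∫_𝕋 (L₂K_{Φ₂}^tI₂)^* L₁K_{Φ₁}^tI₁ dν`
(the integral taken in the weak sense, and `⋀^m H_in` modeled by a Hilbert space `W`
with a wedge map whose Gram matrices are the determinants of the inner-product
matrices and whose wedges span a dense subspace), the kernel `𝒦_k^{(m)}` is a
`B(⋀^m H_in)`-valued positive definite kernel on `𝒯_k(H_in,H_ob;ν)`:
`𝒦_k^{(m)}(D₁,D₂) = 𝒦_k^{(m)}(D₂,D₁)^*` and
`∑_{i,j} ⟨𝒦_k^{(m)}(D_i,D_j) v_i, v_j⟩ ≥ 0` for all finite families. -/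
theorem statement0
    {𝕋 : Type*} [AddCommGroup 𝕋] [MeasurableSpace 𝕋] (ν : Measure 𝕋)
    {𝒳 : Type*} [TopologicalSpace 𝒳] [MeasurableSpace 𝒳] [OpensMeasurableSpace 𝒳]
    (k : 𝒳 → 𝒳 → ℂ)
    (hpd : IsPosDefKernel k)
    (hbdd : ∃ C : ℝ, ∀ x y, ‖k x y‖ ≤ C)
    (hcont : Continuous fun p : 𝒳 × 𝒳 => k p.1 p.2)
    {Ω : Type*} [MeasurableSpace Ω] (P : Measure Ω) [IsProbabilityMeasure P]
    -- the measure-preserving group `Θ = {θ_t}`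
    (θ : 𝕋 → Ω → Ω)
    (hθmp : ∀ t, MeasurePreserving (θ t) P P)
    (hθbij : ∀ t, Function.Bijective (θ t))
    (hθ0 : θ 0 = id) (hθadd : ∀ s t, θ s ∘ θ t = θ (s + t))
    -- the vvRKHS `H_𝐤` of the `B(L²(Ω,P))`-valued kernel `𝐤` built from `k`,
    -- through its feature maps and their Gram identity
    {HK : Type*} [NormedAddCommGroup HK] [InnerProductSpace ℂ HK] [CompleteSpace HK]
    (feat : (Ω → 𝒳) → Lp ℂ 2 P → HK)
    (hGram : ∀ (X Y : Ω → 𝒳), Measurable X → Measurable Y → ∀ f g : Lp ℂ 2 P,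
      ⟪feat X f, feat Y g⟫
        = ∫ ω, k (Y ω) (X ω) * g ω * (starRingEnd ℂ) (f ω) ∂P)
    -- the input and output Hilbert spaces
    {Hin Hob : Type*}
    [NormedAddCommGroup Hin] [InnerProductSpace ℂ Hin] [CompleteSpace Hin]
    [NormedAddCommGroup Hob] [InnerProductSpace ℂ Hob] [CompleteSpace Hob]
    (m : ℕ)
    -- the `m`-th exterior power `W = ⋀^m H_in`
    {W : Type*} [NormedAddCommGroup W] [InnerProductSpace ℂ W] [CompleteSpace W]
    (wedge : (Fin m → Hin) → W)
    (hwedge : ∀ u w : Fin m → Hin,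
      ⟪wedge u, wedge w⟫ = Matrix.det (Matrix.of fun i j => ⟪u i, w j⟫))
    (hwedge_dense : (Submodule.span ℂ (Set.range wedge)).topologicalClosure = ⊤)
    -- the operators `𝒦_k^{(m)}(D₁,D₂) = ⋀^m ∫_𝕋 (L₂K_{Φ₂}^tI₂)^* L₁K_{Φ₁}^tI₁ dν`,
    -- characterized weakly on wedges
    (𝒦 : RDSTriple θ feat Hin Hob ν → RDSTriple θ feat Hin Hob ν → (W →L[ℂ] W))
    (h𝒦 : ∀ (D₁ D₂ : RDSTriple θ feat Hin Hob ν) (u w : Fin m → Hin),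
      ⟪wedge w, 𝒦 D₁ D₂ (wedge u)⟫
        = Matrix.det (Matrix.of fun i j =>
            ∫ t, ⟪D₂.L ((D₂.K t) (D₂.I (w i))), D₁.L ((D₁.K t) (D₁.I (u j)))⟫ ∂ν)) :
    -- `𝒦_k^{(m)}` is a `B(⋀^m H_in)`-valued positive definite kernel
    (∀ D₁ D₂ : RDSTriple θ feat Hin Hob ν,
      𝒦 D₁ D₂ = ContinuousLinearMap.adjoint (𝒦 D₂ D₁)) ∧
    (∀ (r : ℕ) (D : Fin r → RDSTriple θ feat Hin Hob ν) (v : Fin r → W),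
      0 ≤ ∑ i, ∑ j, ⟪v j, 𝒦 (D i) (D j) (v i)⟫) := by
  classical
  -- extension of weak identities from wedges to all of W
  have hext : ∀ (f : W →L[ℂ] ℂ), (∀ u : Fin m → Hin, f (wedge u) = 0) → ∀ x, f x = 0 := by
    intro f hf x
    have h1 : Submodule.span ℂ (Set.range wedge) ≤ f.ker := by
      rw [Submodule.span_le]
      rintro _ ⟨u, rfl⟩
      exact hf u
    have h2 : (Submodule.span ℂ (Set.range wedge)).topologicalClosure ≤ f.ker :=
      Submodule.topologicalClosure_minimal _ h1 (ContinuousLinearMap.isClosed_ker f)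
    have hx : x ∈ f.ker := h2 (by rw [hwedge_dense]; trivial)
    exact hx
  -- symmetry on wedges
  have hsymm : ∀ (D₁ D₂ : RDSTriple θ feat Hin Hob ν) (u w : Fin m → Hin),
      ⟪𝒦 D₁ D₂ (wedge u), wedge w⟫ = ⟪wedge u, 𝒦 D₂ D₁ (wedge w)⟫ := by
    intro D₁ D₂ u w
    rw [← inner_conj_symm, h𝒦 D₁ D₂ u w, h𝒦 D₂ D₁ w u, RingHom.map_det,
      ← Matrix.det_transpose]
    congr 1
    ext i j
    simp only [Matrix.transpose_apply, RingHom.mapMatrix_apply, Matrix.map_apply,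
      Matrix.of_apply]
    rw [← integral_conj]
    exact integral_congr_ae (Filter.Eventually.of_forall fun t => inner_conj_symm _ _)
  have hadj : ∀ D₁ D₂ : RDSTriple θ feat Hin Hob ν,
      𝒦 D₁ D₂ = ContinuousLinearMap.adjoint (𝒦 D₂ D₁) := by
    intro D₁ D₂
    rw [ContinuousLinearMap.eq_adjoint_iff]
    have step1 : ∀ (u : Fin m → Hin) (y : W),
        ⟪𝒦 D₁ D₂ (wedge u), y⟫ = ⟪wedge u, 𝒦 D₂ D₁ y⟫ := by
      intro u y
      have hz : ∀ w : Fin m → Hin,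
          (innerSL ℂ (𝒦 D₁ D₂ (wedge u)) - (innerSL ℂ (wedge u)).comp (𝒦 D₂ D₁)) (wedge w)
            = 0 := by
        intro w
        simp only [ContinuousLinearMap.sub_apply, ContinuousLinearMap.comp_apply,
          innerSL_apply_apply]
        rw [hsymm D₁ D₂ u w, sub_self]
      have h0 := hext _ hz y
      simp only [ContinuousLinearMap.sub_apply, ContinuousLinearMap.comp_apply,
        innerSL_apply_apply, sub_eq_zero] at h0
      exact h0
    intro x y
    have hz : ∀ u : Fin m → Hin,
        ((innerSL ℂ y).comp (𝒦 D₁ D₂) - innerSL ℂ (𝒦 D₂ D₁ y)) (wedge u) = 0 := by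
      intro u
      simp only [ContinuousLinearMap.sub_apply, ContinuousLinearMap.comp_apply,
        innerSL_apply_apply, sub_eq_zero]
      have h1 := step1 u y
      have h2 := congrArg (starRingEnd ℂ) h1
      rwa [inner_conj_symm, inner_conj_symm] at h2
    have h0 := hext _ hz x
    simp only [ContinuousLinearMap.sub_apply, ContinuousLinearMap.comp_apply,
      innerSL_apply_apply, sub_eq_zero] at h0
    have h2 := congrArg (starRingEnd ℂ) h0
    rwa [inner_conj_symm, inner_conj_symm] at h2
  refine ⟨hadj, ?_⟩
  -- positivity on wedge combinations, via the L²(ν, Hob) Gram representation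
  have pairs : ∀ (ι : Type) [Fintype ι] [DecidableEq ι]
      (d : ι → RDSTriple θ feat Hin Hob ν) (uu : ι → Fin m → Hin) (cc : ι → ℂ),
      0 ≤ ∑ β, ∑ α, (starRingEnd ℂ) (cc β) * cc α *
          ⟪wedge (uu β), 𝒦 (d α) (d β) (wedge (uu α))⟫ := by
    intro ι _ _ d uu cc
    set gE : ι → Fin m → Lp Hob 2 ν :=
      fun α a => MemLp.toLp _ ((d α).hL2 (uu α a)) with hgE
    have hrw : ∀ β α, ⟪wedge (uu β), 𝒦 (d α) (d β) (wedge (uu α))⟫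
        = Matrix.det (Matrix.of fun a b => ⟪gE β a, gE α b⟫) := by
      intro β α
      rw [h𝒦 (d α) (d β) (uu α) (uu β)]
      congr 1
      ext a b
      rw [Matrix.of_apply, Matrix.of_apply, MeasureTheory.L2.inner_def]
      refine integral_congr_ae ?_
      filter_upwards [MemLp.coeFn_toLp ((d β).hL2 (uu β a)),
        MemLp.coeFn_toLp ((d α).hL2 (uu α b))] with t h1 h2
      rw [hgE]
      simp only []
      rw [h1, h2]
    calc (0 : ℂ) ≤ ∑ β, ∑ α, (starRingEnd ℂ) (cc β) * cc α *
          Matrix.det (Matrix.of fun a b => ⟪gE β a, gE α b⟫) := det_gram_nonneg gE cc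
      _ = ∑ β, ∑ α, (starRingEnd ℂ) (cc β) * cc α *
          ⟪wedge (uu β), 𝒦 (d α) (d β) (wedge (uu α))⟫ := by
        exact Finset.sum_congr rfl fun β _ => Finset.sum_congr rfl fun α _ => by
          rw [hrw β α]
  -- positivity for vectors in the span of the wedges
  have hspan : ∀ (r : ℕ) (D : Fin r → RDSTriple θ feat Hin Hob ν) (v : Fin r → W),
      (∀ i, v i ∈ Submodule.span ℂ (Set.range wedge)) →
      0 ≤ ∑ i, ∑ j, ⟪v j, 𝒦 (D i) (D j) (v i)⟫ := by
    intro r D v hv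
    have hrep : ∀ i, ∃ (n : ℕ) (c : Fin n → ℂ) (u : Fin n → Fin m → Hin),
        v i = ∑ p, c p • wedge (u p) := by
      intro i
      obtain ⟨n, c, gfun, hsum⟩ := Submodule.mem_span_set'.mp (hv i)
      choose u hu using fun p => (gfun p).2
      exact ⟨n, c, u, by
        rw [← hsum]
        exact (Finset.sum_congr rfl fun p _ => by rw [hu p]).symm⟩
    choose n c u hvrep using hrep
    have hexpand : ∀ i j, ⟪v j, 𝒦 (D i) (D j) (v i)⟫
        = ∑ p : Fin (n j), ∑ q : Fin (n i),
            (starRingEnd ℂ) (c j p) * c i q *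
              ⟪wedge (u j p), 𝒦 (D i) (D j) (wedge (u i q))⟫ := by
      intro i j
      rw [hvrep i, hvrep j, map_sum, sum_inner]
      refine Finset.sum_congr rfl fun p _ => ?_
      rw [inner_smul_left, inner_sum, Finset.mul_sum]
      refine Finset.sum_congr rfl fun q _ => ?_
      rw [_root_.map_smul, inner_smul_right]
      ring
    have key := pairs ((p : Fin r) × Fin (n p)) (fun x => D x.1)
      (fun x => u x.1 x.2) (fun x => c x.1 x.2)
    have esig : ∀ (F : ((p : Fin r) × Fin (n p)) → ℂ),
        ∑ x, F x = ∑ j, ∑ p : Fin (n j), F ⟨j, p⟩ := by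
      intro F
      calc ∑ x, F x = ∑ x ∈ Finset.univ.sigma (fun _ => Finset.univ), F x :=
            (Finset.sum_congr Finset.univ_sigma_univ fun _ _ => rfl).symm
        _ = ∑ j, ∑ p : Fin (n j), F ⟨j, p⟩ := Finset.sum_sigma _ _ _
    have e1 : ∑ β : (p : Fin r) × Fin (n p), ∑ α : (p : Fin r) × Fin (n p),
          (starRingEnd ℂ) (c β.1 β.2) * c α.1 α.2 *
            ⟪wedge (u β.1 β.2), 𝒦 (D α.1) (D β.1) (wedge (u α.1 α.2))⟫
        = ∑ j, ∑ p : Fin (n j), ∑ i, ∑ q : Fin (n i),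
            (starRingEnd ℂ) (c j p) * c i q *
              ⟪wedge (u j p), 𝒦 (D i) (D j) (wedge (u i q))⟫ := by
      rw [esig]
      refine Finset.sum_congr rfl fun j _ => Finset.sum_congr rfl fun p _ => ?_
      rw [esig]
    have e2 : ∑ j, ∑ p : Fin (n j), ∑ i, ∑ q : Fin (n i),
          (starRingEnd ℂ) (c j p) * c i q *
            ⟪wedge (u j p), 𝒦 (D i) (D j) (wedge (u i q))⟫
        = ∑ i, ∑ j, ∑ p : Fin (n j), ∑ q : Fin (n i),
            (starRingEnd ℂ) (c j p) * c i q *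
              ⟪wedge (u j p), 𝒦 (D i) (D j) (wedge (u i q))⟫ := by
      rw [show (∑ j, ∑ p : Fin (n j), ∑ i, ∑ q : Fin (n i),
            (starRingEnd ℂ) (c j p) * c i q *
              ⟪wedge (u j p), 𝒦 (D i) (D j) (wedge (u i q))⟫)
          = ∑ j, ∑ i, ∑ p : Fin (n j), ∑ q : Fin (n i),
            (starRingEnd ℂ) (c j p) * c i q *
              ⟪wedge (u j p), 𝒦 (D i) (D j) (wedge (u i q))⟫ from
        Finset.sum_congr rfl fun j _ => Finset.sum_comm]
      exact Finset.sum_comm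
    rw [e1, e2] at key
    calc (0 : ℂ) ≤ ∑ i, ∑ j, ∑ p : Fin (n j), ∑ q : Fin (n i),
          (starRingEnd ℂ) (c j p) * c i q *
            ⟪wedge (u j p), 𝒦 (D i) (D j) (wedge (u i q))⟫ := key
      _ = ∑ i, ∑ j, ⟪v j, 𝒦 (D i) (D j) (v i)⟫ :=
        Finset.sum_congr rfl fun i _ => Finset.sum_congr rfl fun j _ =>
          (hexpand i j).symm
  -- conclude by density and continuity
  intro r D v
  set Q : (Fin r → W) → ℂ := fun v => ∑ i, ∑ j, ⟪v j, 𝒦 (D i) (D j) (v i)⟫ with hQ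
  have hQcont : Continuous Q := by
    refine continuous_finset_sum _ fun i _ => continuous_finset_sum _ fun j _ => ?_
    exact Continuous.inner (continuous_apply j)
      ((𝒦 (D i) (D j)).continuous.comp (continuous_apply i))
  have hclosed : IsClosed {w : Fin r → W | 0 ≤ Q w} := by
    have h1 : IsClosed {z : ℂ | 0 ≤ z} := by
      have : {z : ℂ | 0 ≤ z} = {z : ℂ | 0 ≤ z.re} ∩ {z : ℂ | (0 : ℂ).im = z.im} := by
        ext z
        simp [Complex.le_def]
      rw [this]
      exact (isClosed_le continuous_const Complex.continuous_re).inter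
        (isClosed_eq continuous_const Complex.continuous_im)
    exact h1.preimage hQcont
  have hdense : Dense (Set.univ.pi fun _ : Fin r =>
      ((Submodule.span ℂ (Set.range wedge) : Submodule ℂ W) : Set W)) := by
    refine dense_pi Set.univ fun i _ => ?_
    rw [dense_iff_closure_eq, ← Submodule.topologicalClosure_coe, hwedge_dense]
    rfl
  have hsub : (Set.univ.pi fun _ : Fin r =>
      ((Submodule.span ℂ (Set.range wedge) : Submodule ℂ W) : Set W))
      ⊆ {w : Fin r → W | 0 ≤ Q w} := by
    intro w hw
    exact hspan r D w fun i => hw i (Set.mem_univ i)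
  have : v ∈ {w : Fin r → W | 0 ≤ Q w} := by
    have h1 : closure (Set.univ.pi fun _ : Fin r =>
        ((Submodule.span ℂ (Set.range wedge) : Submodule ℂ W) : Set W))
        ⊆ {w : Fin r → W | 0 ≤ Q w} := closure_minimal hsub hclosed
    exact h1 (hdense.closure_eq ▸ Set.mem_univ v : v ∈ closure _)
  exact this
end
end

section
/- Let 𝕋 = ℝ or ℤ, T ∈ 𝕋 with T > 0, ν a finite Borel measure on [0,T] ∩ 𝕋, k a bounded continuous positive definite kernel on a topological space 𝒳, and (Ω,P) a probability space with a group Θ = {θ_t}_{t∈𝕋} of measure-preserving measurable bijections. For i = 1,2 let Φ_i be a random dynamical system on ℳ_i ⊂ 𝒳 with respect to Θ and x_i ∈ ℳ_i, and assume that each path t ↦ Φ_i(t,ω,x_i) is continuous and that ω ↦ Φ_i(·,ω,x_i) is a measurable map from Ω to C⁰(𝕋,𝒳). Let κ_T be the positive definite kernel on C⁰(𝕋,𝒳) given by κ_T(g,h) := ∫_{[0,T]} k(g(t), h(t)) dν(t), let H_{κ_T} be its RKHS, and let μ_{ℒ(Φ_i(·,·,x_i))} := ∫_Ω (κ_T)_{Φ_i(·,ω,x_i)}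 dP(ω) ∈ H_{κ_T} (Bochner integral) be the kernel mean embedding of the law of the path process of Φ_i started at x_i. Then ⟨μ_{ℒ(Φ_1(·,·,x_1))}, μ_{ℒ(Φ_2(·,·,x_2))}⟩_{H_{κ_T}} = ∫_Ω ∫_Ω ∫_{[0,T]} k(Φ_1(t,ω,x_1), Φ_2(t,η,x_2)) dν(t) dP(ω) dP(η), i.e. the metric 𝔩_1^T((Φ_1,x_1),(Φ_2,x_2)) equals the kernel-mean-discrepancy inner product of the laws of the two random processes. -/
open MeasureTheory
open scoped ComplexOrder BigOperators

noncomputable section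

local notation "⟪" x ", " y "⟫" => @inner ℂ _ _ x y

/-- Let `Φ₁, Φ₂` be random dynamical systems on `ℳ₁, ℳ₂ ⊂ 𝒳` with
respect to a measure-preserving group `Θ`, with continuous paths, started at
`x₁ ∈ ℳ₁, x₂ ∈ ℳ₂`.  Let `κ_T(g,h) := ∫_{[0,T]} k(g t, h t) dν(t)` on `C⁰(𝕋,𝒳)`,
with RKHS `H_{κ_T}` (modeled by a feature map `ψ`), and let
`μ_i := ∫_Ω ψ(Φ_i(·,ω,x_i)) dP(ω)` be the kernel mean embeddings of the laws of the
path processes.  Then `⟨μ₁, μ₂⟩_{H_{κ_T}}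
= ∫_Ω ∫_Ω ∫_{[0,T]} k(Φ₁(t,ω,x₁), Φ₂(t,η,x₂)) dν(t) dP(ω) dP(η)`,
i.e. `𝔩₁^T((Φ₁,x₁),(Φ₂,x₂))` is the KMMD inner product of the two laws.
(The Mathlib inner product `⟪·,·⟫` is conjugate-linear in its first slot, so
`⟨μ₁, μ₂⟩` of the paper is `⟪μ₂, μ₁⟫` below.) -/
theorem statement5
    {𝕋 : Type*} [TopologicalSpace 𝕋] [MeasurableSpace 𝕋] [OpensMeasurableSpace 𝕋]
    [AddCommGroup 𝕋] [PartialOrder 𝕋]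
    (ν : Measure 𝕋) [IsFiniteMeasure ν] (T : 𝕋) (hT : 0 < T)
    {𝒳 : Type*} [TopologicalSpace 𝒳] [MeasurableSpace 𝒳] [OpensMeasurableSpace 𝒳]
    (k : 𝒳 → 𝒳 → ℂ)
    (hpd : IsPosDefKernel k)
    (hbdd : ∃ C : ℝ, ∀ x y, ‖k x y‖ ≤ C)
    (hcont : Continuous fun p : 𝒳 × 𝒳 => k p.1 p.2)
    {Ω : Type*} [MeasurableSpace Ω] (P : Measure Ω) [IsProbabilityMeasure P]
    -- the measure-preserving group Θ
    (θ : 𝕋 → Ω → Ω)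
    (hθmp : ∀ t, MeasurePreserving (θ t) P P)
    (hθ0 : θ 0 = id) (hθadd : ∀ s t, θ s ∘ θ t = θ (s + t))
    -- the two random dynamical systems and their initial points
    (M₁ M₂ : Set 𝒳) (Φ₁ Φ₂ : 𝕋 → Ω → 𝒳 → 𝒳) (x₁ x₂ : 𝒳)
    (hx₁ : x₁ ∈ M₁) (hx₂ : x₂ ∈ M₂)
    (hmaps₁ : ∀ t ω x, x ∈ M₁ → Φ₁ t ω x ∈ M₁)
    (hmaps₂ : ∀ t ω x, x ∈ M₂ → Φ₂ t ω x ∈ M₂)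
    (hmeas₁ : Measurable fun p : 𝕋 × Ω × M₁ => Φ₁ p.1 p.2.1 (p.2.2 : 𝒳))
    (hmeas₂ : Measurable fun p : 𝕋 × Ω × M₂ => Φ₂ p.1 p.2.1 (p.2.2 : 𝒳))
    (hinit₁ : ∀ ω x, x ∈ M₁ → Φ₁ 0 ω x = x)
    (hinit₂ : ∀ ω x, x ∈ M₂ → Φ₂ 0 ω x = x)
    (hcoc₁ : ∀ t s ω x, x ∈ M₁ → Φ₁ (t + s) ω x = Φ₁ t (θ s ω) (Φ₁ s ω x))
    (hcoc₂ : ∀ t s ω x, x ∈ M₂ → Φ₂ (t + s) ω x = Φ₂ t (θ s ω) (Φ₂ s ω x))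
    -- continuous paths, measurable as maps into `C⁰(𝕋,𝒳)`
    (path₁ path₂ : Ω → C(𝕋, 𝒳))
    (hpath₁ : ∀ ω t, path₁ ω t = Φ₁ t ω x₁)
    (hpath₂ : ∀ ω t, path₂ ω t = Φ₂ t ω x₂)
    (hpathmeas₁ : @Measurable Ω C(𝕋, 𝒳) _ (borel _) path₁)
    (hpathmeas₂ : @Measurable Ω C(𝕋, 𝒳) _ (borel _) path₂)
    -- the RKHS of the integral-type kernel `κ_T`, via its feature map `ψ`
    {Hκ : Type*} [NormedAddCommGroup Hκ] [InnerProductSpace ℂ Hκ] [CompleteSpace Hκ]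
    (ψ : C(𝕋, 𝒳) → Hκ)
    (hψ : ∀ g h : C(𝕋, 𝒳),
      ⟪ψ g, ψ h⟫ = ∫ t in Set.Icc (0 : 𝕋) T, k (h t) (g t) ∂ν)
    (hψdense : (Submodule.span ℂ (Set.range ψ)).topologicalClosure = ⊤)
    -- Bochner integrability of the embedded paths
    (hInt₁ : Integrable (fun ω => ψ (path₁ ω)) P)
    (hInt₂ : Integrable (fun ω => ψ (path₂ ω)) P) :
    ⟪∫ ω, ψ (path₂ ω) ∂P, ∫ ω, ψ (path₁ ω) ∂P⟫
      = ∫ η, ∫ ω, ∫ t in Set.Icc (0 : 𝕋) T,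
          k (Φ₁ t ω x₁) (Φ₂ t η x₂) ∂ν ∂P ∂P := by
  have key : ∀ η, ⟪ψ (path₂ η), ∫ ω, ψ (path₁ ω) ∂P⟫
      = ∫ ω, ∫ t in Set.Icc (0 : 𝕋) T, k (Φ₁ t ω x₁) (Φ₂ t η x₂) ∂ν ∂P := by
    intro η
    rw [← integral_inner hInt₁]
    refine integral_congr_ae (Filter.Eventually.of_forall fun ω => ?_)
    show ⟪ψ (path₂ η), ψ (path₁ ω)⟫ = _
    rw [hψ]
    refine integral_congr_ae (Filter.Eventually.of_forall fun t => ?_)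
    simp only [hpath₁, hpath₂]
  calc ⟪∫ ω, ψ (path₂ ω) ∂P, ∫ ω, ψ (path₁ ω) ∂P⟫
      = (starRingEnd ℂ) ⟪∫ ω, ψ (path₁ ω) ∂P, ∫ ω, ψ (path₂ ω) ∂P⟫ := by
        rw [inner_conj_symm]
    _ = (starRingEnd ℂ) (∫ η, ⟪∫ ω, ψ (path₁ ω) ∂P, ψ (path₂ η)⟫ ∂P) := by
        rw [integral_inner hInt₂]
    _ = ∫ η, (starRingEnd ℂ) ⟪∫ ω, ψ (path₁ ω) ∂P, ψ (path₂ η)⟫ ∂P := by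
        rw [integral_conj]
    _ = ∫ η, ⟪ψ (path₂ η), ∫ ω, ψ (path₁ ω) ∂P⟫ ∂P := by
        simp_rw [inner_conj_symm]
    _ = ∫ η, ∫ ω, ∫ t in Set.Icc (0 : 𝕋) T,
          k (Φ₁ t ω x₁) (Φ₂ t η x₂) ∂ν ∂P ∂P := by
        simp_rw [key]
end
end

section
/- Let 𝕋 be a topological space (e.g. ℝ or ℤ), μ a finite Borel measure on 𝕋, 𝒳 a topological space, and k a bounded continuous positive definite kernel on 𝒳. Then κ(g,h) := ∫_𝕋 k(g(t), h(t)) dμ(t) defines a positive definite kernel on the space C⁰(𝕋, 𝒳) of continuous maps 𝕋 → 𝒳: κ(g,h) = conj(κ(h,g)) for all g,h, and for every finite family g_1,…,g_n ∈ C⁰(𝕋,𝒳) and c_1,…,c_n ∈ ℂ, ∑_{i,j=1}^n c_i conj(c_j) κ(g_i, g_j) ≥ 0. -/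
open MeasureTheory
open scoped ComplexOrder BigOperators

noncomputable section

local notation "⟪" x ", " y "⟫" => @inner ℂ _ _ x y

/-- If `𝕋` is a topological space with a finite Borel measure `μ`, and
`k` is a bounded continuous positive definite kernel on a topological space `𝒳`, then
the integral-type kernel `κ(g,h) := ∫_𝕋 k(g t, h t) dμ(t)` is a positive definite
kernel on `C⁰(𝕋,𝒳)`: it is Hermitian and all Gram sums
`∑_{i,j} c_i conj(c_j) κ(g_i,g_j)` are nonnegative. -/
theorem statement6
    {𝕋 : Type*} [TopologicalSpace 𝕋] [MeasurableSpace 𝕋] [OpensMeasurableSpace 𝕋]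
    (μ : Measure 𝕋) [IsFiniteMeasure μ]
    {𝒳 : Type*} [TopologicalSpace 𝒳]
    (k : 𝒳 → 𝒳 → ℂ)
    (hpd : IsPosDefKernel k)
    (hbdd : ∃ C : ℝ, ∀ x y, ‖k x y‖ ≤ C)
    (hcont : Continuous fun p : 𝒳 × 𝒳 => k p.1 p.2) :
    (∀ g h : C(𝕋, 𝒳),
      (∫ t, k (g t) (h t) ∂μ) = (starRingEnd ℂ) (∫ t, k (h t) (g t) ∂μ)) ∧
    (∀ (n : ℕ) (g : Fin n → C(𝕋, 𝒳)) (c : Fin n → ℂ),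
      0 ≤ ∑ i, ∑ j, c i * (starRingEnd ℂ) (c j) * ∫ t, k ((g i) t) ((g j) t) ∂μ) := by
  have hInt : ∀ g h : C(𝕋, 𝒳), Integrable (fun t => k (g t) (h t)) μ := by
    obtain ⟨C, hC⟩ := hbdd
    intro g h
    refine Integrable.mono' (integrable_const C)
      ((hcont.comp (g.continuous.prodMk h.continuous)).aestronglyMeasurable) ?_
    filter_upwards with t
    simpa using hC (g t) (h t)
  constructor
  · intro g h
    rw [← integral_conj]
    exact integral_congr_ae (Filter.Eventually.of_forall fun t => hpd.1 (g t) (h t))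
  · intro n g c
    have hij : ∀ i j : Fin n,
        c i * (starRingEnd ℂ) (c j) * ∫ t, k (g i t) (g j t) ∂μ
          = ∫ t, c i * (starRingEnd ℂ) (c j) * k (g i t) (g j t) ∂μ := fun i j =>
      (integral_const_mul _ _).symm
    have hint : ∀ i j : Fin n,
        Integrable (fun t => c i * (starRingEnd ℂ) (c j) * k (g i t) (g j t)) μ := fun i j =>
      (hInt (g i) (g j)).const_mul _
    simp_rw [hij]
    rw [show (∑ i, ∑ j, ∫ t, c i * (starRingEnd ℂ) (c j) * k (g i t) (g j t) ∂μ)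
        = ∫ t, ∑ i, ∑ j, c i * (starRingEnd ℂ) (c j) * k (g i t) (g j t) ∂μ by
      rw [integral_finset_sum _ fun i _ => integrable_finset_sum _ fun j _ => hint i j]
      exact Finset.sum_congr rfl fun i _ => (integral_finset_sum _ fun j _ => hint i j).symm]
    set F : 𝕋 → ℂ := fun t => ∑ i, ∑ j, c i * (starRingEnd ℂ) (c j) * k (g i t) (g j t) with hF
    have hFint : Integrable F μ :=
      integrable_finset_sum _ fun i _ => integrable_finset_sum _ fun j _ => hint i j
    have hFpos : ∀ t, 0 ≤ F t := fun t => hpd.2 n (fun i => g i t) c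
    rw [Complex.nonneg_iff]
    constructor
    · have hre : (∫ t, F t ∂μ).re = ∫ t, (F t).re ∂μ := by
        simpa using (integral_re hFint).symm
      rw [hre]
      refine integral_nonneg fun t => ?_
      have := hFpos t; rw [Complex.nonneg_iff] at this
      exact this.1
    · have him : (∫ t, F t ∂μ).im = ∫ t, (F t).im ∂μ := by
        simpa using (integral_im hFint).symm
      rw [him]
      symm
      refine integral_eq_zero_of_ae (Filter.Eventually.of_forall fun t => ?_)
      have := hFpos t; rw [Complex.nonneg_iff] at this
      exact this.2.symm
end
end

section
/- Let V be a complex Hilbert space, 𝒳 a set, 𝐤: 𝒳×𝒳 → B(V) a B(V)-valued positive definite kernel with vvRKHS H_𝐤, and v ∈ V. Let k_v(x,y) := ⟨v, 𝐤(x,y)v⟩_V, a positive definite kernel on 𝒳 with RKHS H_{k_v}. Then the assignment 𝐤_x v ↦ (k_v)_x (where ((k_v)_x)(y) = k_v(x,y)) extends to an isometric isomorphism of Hilbert spaces from the closure in H_𝐤 of span{𝐤_x v : x ∈ 𝒳} onto H_{k_v}. -/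
open scoped ComplexOrder BigOperators

noncomputable section

local notation "⟪" x ", " y "⟫" => @inner ℂ _ _ x y

/-- Let `K : 𝒳×𝒳 → B(V)` be a `B(V)`-valued positive definite kernel
with vvRKHS `H_K` (modeled through its feature maps `feat x : V → H_K`, `v ↦ 𝐤_x v`,
with the reproducing Gram identity), `v ∈ V`, and let `k_v(x,y) := ⟨v, K(x,y) v⟩` be
the induced scalar positive definite kernel with RKHS `H_v` (modeled through its
feature map `ψ : 𝒳 → H_v` with dense span).  Then `𝐤_x v ↦ (k_v)_x` extends to an
isometric isomorphism from the closure of `span{𝐤_x v : x ∈ 𝒳}` in `H_K` onto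
`H_{k_v}`. -/
theorem statement11
    {V : Type*} [NormedAddCommGroup V] [InnerProductSpace ℂ V] [CompleteSpace V]
    {𝒳 : Type*} (K : 𝒳 → 𝒳 → (V →L[ℂ] V))
    (hherm : ∀ x y, K x y = ContinuousLinearMap.adjoint (K y x))
    (hpos : ∀ (n : ℕ) (x : Fin n → 𝒳) (w : Fin n → V),
      0 ≤ ∑ i, ∑ j, ⟪w j, (K (x i) (x j)) (w i)⟫)
    -- the vvRKHS `H_K`, through its feature maps and their Gram identity
    {HK : Type*} [NormedAddCommGroup HK] [InnerProductSpace ℂ HK] [CompleteSpace HK]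
    (feat : 𝒳 → V →L[ℂ] HK)
    (hfeat : ∀ (x y : 𝒳) (u w : V), ⟪feat x u, feat y w⟫ = ⟪u, (K x y) w⟫)
    (v : V)
    -- the RKHS `H_v` of `k_v`, through its feature map `ψ : x ↦ (k_v)_x`
    {Hv : Type*} [NormedAddCommGroup Hv] [InnerProductSpace ℂ Hv] [CompleteSpace Hv]
    (ψ : 𝒳 → Hv)
    (hψ : ∀ x y : 𝒳, ⟪ψ x, ψ y⟫ = ⟪v, (K x y) v⟫)
    (hψdense : (Submodule.span ℂ (Set.range ψ)).topologicalClosure = ⊤) :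
    ∃ E : ((Submodule.span ℂ (Set.range fun x : 𝒳 => feat x v)).topologicalClosure)
            ≃ₗᵢ[ℂ] Hv,
      ∀ (x : 𝒳)
        (hx : feat x v ∈
          (Submodule.span ℂ (Set.range fun x : 𝒳 => feat x v)).topologicalClosure),
        E ⟨feat x v, hx⟩ = ψ x := by
  classical
  set f : 𝒳 → HK := fun x => feat x v with hf
  set L : (𝒳 →₀ ℂ) →ₗ[ℂ] HK := Finsupp.linearCombination ℂ f with hL
  set M : (𝒳 →₀ ℂ) →ₗ[ℂ] Hv := Finsupp.linearCombination ℂ ψ with hM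
  set p : Submodule ℂ HK := Submodule.span ℂ (Set.range f) with hp
  set q : Submodule ℂ HK := p.topologicalClosure with hq
  -- Gram identity on linear combinations
  have key : ∀ a b : 𝒳 →₀ ℂ, ⟪L a, L b⟫ = ⟪M a, M b⟫ := by
    intro a b
    induction a using Finsupp.induction_linear with
    | zero => simp
    | add a₁ a₂ h₁ h₂ => simp [map_add, inner_add_left, h₁, h₂]
    | single x c =>
      induction b using Finsupp.induction_linear with
      | zero => simp
      | add b₁ b₂ h₁ h₂ => simp [map_add, inner_add_right, h₁, h₂]
      | single y d =>
        simp only [hL, hM, Finsupp.linearCombination_single, inner_smul_left,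
          inner_smul_right, hf]
        rw [hfeat x y v v, hψ x y]
  have hker : LinearMap.ker L ≤ LinearMap.ker M := by
    intro a ha
    rw [LinearMap.mem_ker] at ha ⊢
    have h := key a a
    rw [ha, inner_zero_left] at h
    exact inner_self_eq_zero.mp h.symm
  -- the induced map on the span
  set g : LinearMap.range L →ₗ[ℂ] Hv :=
    ((LinearMap.ker L).liftQ M hker).comp L.quotKerEquivRange.symm.toLinearMap with hg
  have hgL : ∀ (a : 𝒳 →₀ ℂ) (h : L a ∈ LinearMap.range L), g ⟨L a, h⟩ = M a := by
    intro a h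
    have h1 : L.quotKerEquivRange.symm ⟨L a, h⟩ = Submodule.Quotient.mk a := by
      rw [LinearEquiv.symm_apply_eq]
      exact Subtype.ext (L.quotKerEquivRange_apply_mk a).symm
    simp [hg, h1]
  have hrange : LinearMap.range L = p := Finsupp.range_linearCombination ℂ (v := f)
  set gp : p →ₗ[ℂ] Hv := g.comp (LinearEquiv.ofEq p (LinearMap.range L) hrange.symm).toLinearMap
    with hgp
  have hgpL : ∀ (a : 𝒳 →₀ ℂ) (h : L a ∈ p), gp ⟨L a, h⟩ = M a := by
    intro a h
    have : (LinearEquiv.ofEq p (LinearMap.range L) hrange.symm) ⟨L a, h⟩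
        = ⟨L a, hrange ▸ h⟩ := rfl
    simp only [hgp, LinearMap.comp_apply, LinearEquiv.coe_toLinearMap, this]
    exact hgL a _
  have hgpnorm : ∀ u : p, ‖gp u‖ = ‖u‖ := by
    intro u
    obtain ⟨a, ha⟩ : ∃ a, L a = (u : HK) := hrange.symm.le u.2
    have hu : u = ⟨L a, ha ▸ u.2⟩ := Subtype.ext ha.symm
    rw [hu, hgpL a _]
    have h1 : ⟪M a, M a⟫ = ⟪L a, L a⟫ := (key a a).symm
    have h2 : ‖M a‖ = ‖L a‖ := by
      rw [@norm_eq_sqrt_re_inner ℂ, @norm_eq_sqrt_re_inner ℂ (E := HK), h1]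
    rw [h2]
    rfl
  set gI : p →ₗᵢ[ℂ] Hv := ⟨gp, hgpnorm⟩ with hgI
  -- the inclusion of the span into its closure
  set ι : p →ₗᵢ[ℂ] q := ⟨Submodule.inclusion p.le_topologicalClosure, fun _ => rfl⟩ with hι
  have hdense : DenseRange ι := by
    intro u
    rw [closure_subtype]
    have himg : Subtype.val '' Set.range ι = (p : Set HK) := by
      ext z
      constructor
      · rintro ⟨w, ⟨w', rfl⟩, rfl⟩
        exact w'.2
      · rintro hz
        exact ⟨ι ⟨z, hz⟩, ⟨⟨z, hz⟩, rfl⟩, rfl⟩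
    rw [himg]
    have := u.2
    rw [hq, ← Submodule.topologicalClosure_coe] at *
    exact this
  have huind : IsUniformInducing ι := ι.isometry.isUniformInducing
  haveI : CompleteSpace q := IsClosed.completeSpace_coe (hs := p.isClosed_topologicalClosure)
  set G : q →L[ℂ] Hv :=
    ContinuousLinearMap.extend gI.toContinuousLinearMap ι.toContinuousLinearMap
    with hG
  have hGe : ∀ u : p, G (ι u) = gI u := fun u =>
    ContinuousLinearMap.extend_eq _ hdense huind u
  have hGnorm : ∀ u : q, ‖G u‖ = ‖u‖ := by
    have : (fun u : q => ‖G u‖) = fun u : q => ‖u‖ := by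
      refine hdense.equalizer (G.continuous.norm) continuous_norm ?_
      funext u
      simp only [Function.comp_apply, hGe u]
      rw [gI.norm_map]
      rfl
    intro u; exact congrFun this u
  set GI : q →ₗᵢ[ℂ] Hv := ⟨(G : q →ₗ[ℂ] Hv), hGnorm⟩ with hGI
  have hmem : ∀ x : 𝒳, feat x v ∈ p := fun x => Submodule.subset_span ⟨x, rfl⟩
  have hGψ : ∀ x : 𝒳, GI (ι ⟨feat x v, hmem x⟩) = ψ x := by
    intro x
    have h1 : GI (ι ⟨feat x v, hmem x⟩) = gI ⟨feat x v, hmem x⟩ := hGe _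
    rw [h1]
    have h2 : L (Finsupp.single x 1) = feat x v := by
      simp [hL, hf]
    have h3 : (⟨feat x v, hmem x⟩ : p) = ⟨L (Finsupp.single x 1), h2 ▸ hmem x⟩ :=
      Subtype.ext h2.symm
    show gp _ = _
    rw [h3, hgpL]
    simp [hM]
  have hsurj : Function.Surjective GI := by
    have hclosed : IsClosed (Set.range GI) :=
      (GI.isometry.isClosedEmbedding).isClosed_range
    have hle : Submodule.span ℂ (Set.range ψ) ≤ LinearMap.range GI.toLinearMap := by
      rw [Submodule.span_le]
      rintro _ ⟨x, rfl⟩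
      exact ⟨ι ⟨feat x v, hmem x⟩, hGψ x⟩
    have htop : (⊤ : Submodule ℂ Hv) ≤ LinearMap.range GI.toLinearMap := by
      rw [← hψdense]
      exact Submodule.topologicalClosure_minimal _ hle hclosed
    intro y
    exact htop (Submodule.mem_top (x := y))
  refine ⟨LinearIsometryEquiv.ofSurjective GI hsurj, fun x hx => ?_⟩
  have h4 : (⟨feat x v, hx⟩ : q) = ι ⟨feat x v, hmem x⟩ := Subtype.ext rfl
  rw [LinearIsometryEquiv.coe_ofSurjective, h4, hGψ x]
end
end

section
/- Let 𝒳 be a topological space equipped with its Borel σ-algebra, k a bounded continuous positive definite kernel on 𝒳, and (Ω,P) a probability space. For measurable X, Y: Ω → 𝒳, define 𝐤(X,Y): L²(Ω,P) → L²(Ω,P) by (𝐤(X,Y)f)(ω) := k(X(ω),Y(ω)) f(ω). Then: (a) 𝐤(X,Y) is a bounded linear operator with operator norm ‖𝐤(X,Y)‖ ≤ ess sup_{ω∈Ω} |k(X(ω),Y(ω))| ≤ sup_{x,y∈𝒳} |k(x,y)| < ∞; and (b) 𝐤 is a B(L²(Ω,P))-valued positive definite kernel on the set M(Ω,𝒳)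 of measurable maps Ω → 𝒳: 𝐤(X,Y) = 𝐤(Y,X)^* for all X,Y, and ∑_{i,j=1}^n ⟨𝐤(X_i,X_j) f_i, f_j⟩_{L²(Ω)} ≥ 0 for all n, X_1,…,X_n ∈ M(Ω,𝒳), f_1,…,f_n ∈ L²(Ω,P). -/
open MeasureTheory
open scoped ComplexOrder BigOperators

noncomputable section

local notation "⟪" x ", " y "⟫" => @inner ℂ _ _ x y

/-- A complex-valued integrable function that is a.e. nonnegative (in the complex order)
has nonnegative integral. -/
lemma integral_nonneg_complex {Ω : Type*} [MeasurableSpace Ω] {P : Measure Ω} {F : Ω → ℂ}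
    (hF : Integrable F P) (h : ∀ᵐ ω ∂P, 0 ≤ F ω) : 0 ≤ ∫ ω, F ω ∂P := by
  have h1 : F =ᵐ[P] fun ω => ((F ω).re : ℂ) := by
    filter_upwards [h] with ω hω
    rw [Complex.le_def] at hω
    exact Complex.ext rfl (by simpa using hω.2.symm)
  rw [integral_congr_ae h1]
  have h2 : ∫ ω, ((F ω).re : ℂ) ∂P = ((∫ ω, (F ω).re ∂P : ℝ) : ℂ) := integral_ofReal
  rw [h2, Complex.zero_le_real]
  apply integral_nonneg_of_ae
  filter_upwards [h] with ω hω
  simpa using (Complex.le_def.mp hω).1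

/-- Let `k` be a bounded continuous positive definite kernel on a
topological space `𝒳` with its Borel σ-algebra, and `(Ω,P)` a probability space.
For measurable `X, Y : Ω → 𝒳`, let `𝐊(X,Y)` be the operator on `L²(Ω,P)` given by
`(𝐊(X,Y) f)(ω) = k(X ω, Y ω) f(ω)` (here hypothesized as a family of bounded
operators acting in this way a.e.).  Then:
(a) `‖𝐊(X,Y)‖ ≤ ess sup_ω |k(X ω, Y ω)| ≤ sup_{x,y} |k(x,y)|`, and
(b) `𝐊` is a `B(L²(Ω,P))`-valued positive definite kernel on the set of measurable
maps `Ω → 𝒳`: `𝐊(X,Y) = 𝐊(Y,X)^*` and all Gram sums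
`∑_{i,j} ⟨𝐊(X_i,X_j) f_i, f_j⟩` are nonnegative. -/
theorem statement12
    {𝒳 : Type*} [TopologicalSpace 𝒳] [MeasurableSpace 𝒳] [OpensMeasurableSpace 𝒳]
    (k : 𝒳 → 𝒳 → ℂ)
    (hpd : IsPosDefKernel k)
    (hbdd : ∃ C : ℝ, ∀ x y, ‖k x y‖ ≤ C)
    (hcont : Continuous fun p : 𝒳 × 𝒳 => k p.1 p.2)
    {Ω : Type*} [MeasurableSpace Ω] (P : Measure Ω) [IsProbabilityMeasure P]
    (K : (Ω → 𝒳) → (Ω → 𝒳) → (Lp ℂ 2 P →L[ℂ] Lp ℂ 2 P))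
    (hK : ∀ (X Y : Ω → 𝒳), Measurable X → Measurable Y → ∀ f : Lp ℂ 2 P,
      (K X Y f : Ω → ℂ) =ᵐ[P] fun ω => k (X ω) (Y ω) * f ω) :
    (∀ (X Y : Ω → 𝒳), Measurable X → Measurable Y →
      ‖K X Y‖ ≤ essSup (fun ω => ‖k (X ω) (Y ω)‖) P ∧
      essSup (fun ω => ‖k (X ω) (Y ω)‖) P
        ≤ ⨆ p : 𝒳 × 𝒳, ‖k p.1 p.2‖) ∧
    (∀ (X Y : Ω → 𝒳), Measurable X → Measurable Y →
      K X Y = ContinuousLinearMap.adjoint (K Y X)) ∧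
    (∀ (n : ℕ) (X : Fin n → Ω → 𝒳), (∀ i, Measurable (X i)) →
      ∀ f : Fin n → Lp ℂ 2 P,
        0 ≤ ∑ i, ∑ j, ⟪f j, (K (X i) (X j)) (f i)⟫) := by
  obtain ⟨C, hC⟩ := hbdd
  refine ⟨?_, ?_, ?_⟩
  · -- part (a)
    intro X Y hX hY
    set g : Ω → ℝ := fun ω => ‖k (X ω) (Y ω)‖ with hg
    have hbd : Filter.IsBoundedUnder (· ≤ ·) (ae P) g :=
      Filter.isBoundedUnder_of ⟨C, fun ω => hC _ _⟩
    have hbd0 : Filter.IsBoundedUnder (· ≥ ·) (ae P) g :=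
      Filter.isBoundedUnder_of ⟨0, fun ω => norm_nonneg _⟩
    have hae : ∀ᵐ ω ∂P, g ω ≤ essSup g P := ae_le_essSup hbd
    have hM0 : 0 ≤ essSup g P := by
      obtain ⟨ω, hω⟩ := hae.exists
      exact le_trans (norm_nonneg _) hω
    set M : ℝ := essSup g P with hM
    constructor
    · apply ContinuousLinearMap.opNorm_le_bound _ hM0
      intro f
      have h1 : (K X Y f : Ω → ℂ) =ᵐ[P] fun ω => k (X ω) (Y ω) * (f : Ω → ℂ) ω :=
        hK X Y hX hY f
      have hsmul : eLpNorm ((M : ℂ) • (f : Ω → ℂ)) 2 P = ‖(M : ℂ)‖₊ • eLpNorm (f : Ω → ℂ) 2 P :=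
        eLpNorm_const_smul _ _ _ _
      calc ‖K X Y f‖ = (eLpNorm (K X Y f : Ω → ℂ) 2 P).toReal := Lp.norm_def _
        _ ≤ (eLpNorm ((M : ℂ) • (f : Ω → ℂ)) 2 P).toReal := by
            apply ENNReal.toReal_mono
            · rw [hsmul, ENNReal.smul_def, smul_eq_mul]
              exact ENNReal.mul_ne_top ENNReal.coe_ne_top (Lp.eLpNorm_ne_top f)
            · rw [eLpNorm_congr_ae h1]
              apply eLpNorm_mono_ae
              filter_upwards [hae] with ω hω
              simp only [Pi.smul_apply, smul_eq_mul, norm_mul, Complex.norm_real,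
                Real.norm_eq_abs]
              rw [abs_of_nonneg hM0]
              exact mul_le_mul_of_nonneg_right hω (norm_nonneg _)
        _ = M * ‖f‖ := by
            rw [hsmul, ENNReal.smul_def, smul_eq_mul, ENNReal.toReal_mul, ENNReal.coe_toReal,
              coe_nnnorm, Complex.norm_real, Real.norm_eq_abs, abs_of_nonneg hM0, Lp.norm_def]
    · have hba : BddAbove (Set.range fun p : 𝒳 × 𝒳 => ‖k p.1 p.2‖) := by
        refine ⟨C, ?_⟩
        rintro r ⟨p, rfl⟩
        exact hC _ _
      refine Filter.limsup_le_of_le hbd0.isCobounded_le ?_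
      apply Filter.Eventually.of_forall
      intro ω
      exact le_ciSup hba (X ω, Y ω)
  · -- part (b1): adjoint
    intro X Y hX hY
    rw [ContinuousLinearMap.eq_adjoint_iff]
    intro f g
    rw [L2.inner_def, L2.inner_def]
    apply integral_congr_ae
    filter_upwards [hK X Y hX hY f, hK Y X hY hX g] with ω h1 h2
    simp only [RCLike.inner_apply, h1, h2, map_mul, RCLike.star_def]
    have hconj : (starRingEnd ℂ) (k (X ω) (Y ω)) = k (Y ω) (X ω) := by
      rw [hpd.1 (X ω) (Y ω)]; exact Complex.conj_conj _
    rw [hconj]; ring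
  · -- part (b2): positivity
    intro n X hX f
    set G : Fin n → Fin n → Ω → ℂ := fun i j ω =>
      k (X i ω) (X j ω) * ((starRingEnd ℂ) ((f j : Ω → ℂ) ω) * (f i : Ω → ℂ) ω) with hG
    have hint : ∀ i j, Integrable (G i j) P := by
      intro i j
      refine (L2.integrable_inner (𝕜 := ℂ) (f j) (K (X i) (X j) (f i))).congr ?_
      filter_upwards [hK (X i) (X j) (hX i) (hX j) (f i)] with ω h
      simp only [RCLike.inner_apply, h, hG]
      ring
    have hterm : ∀ i j, ⟪f j, (K (X i) (X j)) (f i)⟫ = ∫ ω, G i j ω ∂P := by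
      intro i j
      rw [L2.inner_def]
      apply integral_congr_ae
      filter_upwards [hK (X i) (X j) (hX i) (hX j) (f i)] with ω h
      simp only [RCLike.inner_apply, h, hG]
      ring
    calc (0 : ℂ) ≤ ∫ ω, ∑ i, ∑ j, G i j ω ∂P := by
          apply integral_nonneg_complex
          · exact integrable_finset_sum _ fun i _ => integrable_finset_sum _ fun j _ => hint i j
          · apply Filter.Eventually.of_forall
            intro ω
            refine le_of_le_of_eq (hpd.2 n (fun i => X i ω) (fun i => (f i : Ω → ℂ) ω)) ?_
            exact Finset.sum_congr rfl fun i _ => Finset.sum_congr rfl fun j _ => by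
              simp only [hG]; ring
      _ = ∑ i, ∑ j, ∫ ω, G i j ω ∂P := by
          rw [integral_finset_sum _ (fun i _ => integrable_finset_sum _ fun j _ => hint i j)]
          exact Finset.sum_congr rfl fun i _ =>
            integral_finset_sum _ fun j _ => hint i j
      _ = ∑ i, ∑ j, ⟪f j, (K (X i) (X j)) (f i)⟫ :=
          Finset.sum_congr rfl fun i _ => Finset.sum_congr rfl fun j _ => (hterm i j).symm
end
end

section
/- Let 𝒳 be a topological space with its Borel σ-algebra, k a bounded continuous positive definite kernel on 𝒳 with RKHS H_k, (Ω,P) a probability space, 𝐤 the B(L²(Ω,P))-valued positive definite kernel on M(Ω,𝒳) given by (𝐤(X,Y)f)(ω) := k(X(ω),Y(ω))f(ω), with vvRKHS H_𝐤, and 𝟏 ∈ L²(Ω,P) the constant function 1. Then: (a) the assignment k_x ↦ 𝐤_x 𝟏 (x ∈ 𝒳, viewed as a constant random variable) extends uniquely to an isometric linear embedding ι: H_k → H_𝐤, and for every h ∈ H_k and X ∈ M(Ω,𝒳), ι(h)(X) = h ∘ X as an element of L²(Ω,P); and (b) the adjoint ι^*: H_𝐤 → H_k satisfies (ι^* g)(x)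 = ∫_Ω g(x)(ω) dP(ω) for every g ∈ H_𝐤 and x ∈ 𝒳 (where x is regarded as a constant random variable so that g(x) ∈ L²(Ω,P)); in particular, for X ∈ M(Ω,𝒳) and v ∈ L²(Ω,P), ι^*(𝐤_X v)(x) = ∫_Ω k(X(ω), x) v(ω) dP(ω). -/
open MeasureTheory
open scoped ComplexOrder BigOperators

noncomputable section

local notation "⟪" x ", " y "⟫" => @inner ℂ _ _ x y

set_option maxHeartbeats 2000000 in
set_option synthInstance.maxHeartbeats 400000 in
/-- Let `k` be a bounded continuous positive definite kernel on `𝒳`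
with RKHS `H_k` (modeled by a feature map `φ : 𝒳 → Hk`, `x ↦ k_x`, with dense span
and evaluation `evk`), `(Ω,P)` a probability space, and `H_𝐤` the vvRKHS of the
operator-valued kernel `(𝐤(X,Y)f)(ω) = k(X ω, Y ω) f(ω)` on `M(Ω,𝒳)` (modeled by
feature operators `feat Y : L²(Ω,P) → H_𝐤` with evaluation `evK` satisfying the
reproducing identities).  Let `𝟏 ∈ L²(Ω,P)` be the constant function `1`.  Then:
(a) `k_x ↦ 𝐤_x 𝟏` extends uniquely to a linear isometric embedding `ι : H_k → H_𝐤`,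
and `ι(h)(X) = h ∘ X` in `L²(Ω,P)` for all `h ∈ H_k` and measurable `X`; and
(b) the adjoint satisfies `(ι^* g)(x) = ∫ g(x)(ω) dP(ω)`; in particular
`ι^*(𝐤_X v)(x) = ∫ k(X ω, x) v(ω) dP(ω)`. -/
theorem statement16
    {𝒳 : Type*} [TopologicalSpace 𝒳] [MeasurableSpace 𝒳] [OpensMeasurableSpace 𝒳]
    (k : 𝒳 → 𝒳 → ℂ)
    (hpd : IsPosDefKernel k)
    (hbdd : ∃ C : ℝ, ∀ x y, ‖k x y‖ ≤ C)
    (hcont : Continuous fun p : 𝒳 × 𝒳 => k p.1 p.2)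
    {Ω : Type*} [MeasurableSpace Ω] (P : Measure Ω) [IsProbabilityMeasure P]
    -- the RKHS `H_k`
    {Hk : Type*} [NormedAddCommGroup Hk] [InnerProductSpace ℂ Hk] [CompleteSpace Hk]
    (φ : 𝒳 → Hk) (hφ : ∀ x y, ⟪φ x, φ y⟫ = k y x)
    (hφdense : (Submodule.span ℂ (Set.range φ)).topologicalClosure = ⊤)
    (evk : Hk → 𝒳 → ℂ) (hevk : ∀ (f : Hk) (a : 𝒳), evk f a = ⟪φ a, f⟫)
    -- the vvRKHS `H_𝐤`
    {HK : Type*} [NormedAddCommGroup HK] [InnerProductSpace ℂ HK] [CompleteSpace HK]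
    (feat : (Ω → 𝒳) → (Lp ℂ 2 P →L[ℂ] HK))
    (evK : HK → (Ω → 𝒳) → Lp ℂ 2 P)
    (hrep : ∀ (Y : Ω → 𝒳), Measurable Y → ∀ (f : Lp ℂ 2 P) (h : HK),
      ⟪feat Y f, h⟫ = ⟪f, evK h Y⟫)
    (hfeatval : ∀ (X Y : Ω → 𝒳), Measurable X → Measurable Y → ∀ f : Lp ℂ 2 P,
      (evK (feat Y f) X : Ω → ℂ) =ᵐ[P] fun ω => k (Y ω) (X ω) * f ω)
    -- the constant function `𝟏`
    (one : Lp ℂ 2 P) (hone : (one : Ω → ℂ) =ᵐ[P] fun _ => (1 : ℂ)) :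
    -- (a) existence and uniqueness of the isometric embedding
    (∃! ι : Hk →ₗᵢ[ℂ] HK, ∀ x : 𝒳, ι (φ x) = feat (fun _ => x) one) ∧
    -- and its properties
    (∀ ι : Hk →ₗᵢ[ℂ] HK, (∀ x : 𝒳, ι (φ x) = feat (fun _ => x) one) →
      -- `ι(h)(X) = h ∘ X`
      ((∀ (h : Hk) (X : Ω → 𝒳), Measurable X →
        (evK (ι h) X : Ω → ℂ) =ᵐ[P] fun ω => evk h (X ω)) ∧
      -- (b) `(ι^* g)(x) = E_P[g(x)]`
      (∀ (g : HK) (x : 𝒳),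
        evk ((ContinuousLinearMap.adjoint ι.toContinuousLinearMap) g) x
          = ∫ ω, (evK g (fun _ => x) : Ω → ℂ) ω ∂P) ∧
      -- in particular `ι^*(𝐤_X v)(x) = ∫ k(X ω, x) v(ω) dP(ω)`
      (∀ (X : Ω → 𝒳), Measurable X → ∀ (f : Lp ℂ 2 P) (x : 𝒳),
        evk ((ContinuousLinearMap.adjoint ι.toContinuousLinearMap) (feat X f)) x
          = ∫ ω, k (X ω) x * f ω ∂P))) := by
  classical
  obtain ⟨C, hC⟩ := hbdd
  set Φ : 𝒳 → HK := fun x => feat (fun _ => x) one with hΦdef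
  -- inner products against `feat Y one` are integrals
  have hinner_one : ∀ (Y : Ω → 𝒳), Measurable Y → ∀ g : HK,
      ⟪feat Y one, g⟫ = ∫ ω, (evK g Y : Ω → ℂ) ω ∂P := by
    intro Y hY g
    rw [hrep Y hY one g, MeasureTheory.L2.inner_def]
    refine integral_congr_ae ?_
    filter_upwards [hone] with ω hω
    simp [RCLike.inner_apply, hω]
  -- the Gram matrices of `Φ` and `φ` agree
  have hgramΦ : ∀ x y, ⟪Φ x, Φ y⟫ = k y x := by
    intro x y
    rw [hΦdef, hinner_one _ measurable_const]
    have h1 := hfeatval (fun _ => x) (fun _ => y) measurable_const measurable_const one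
    have h2 : (fun ω => (evK (Φ y) (fun _ => x) : Ω → ℂ) ω) =ᵐ[P] fun _ => k y x := by
      filter_upwards [h1, hone] with ω h1ω h2ω
      simpa [hΦdef, h2ω] using h1ω
    rw [integral_congr_ae h2]
    simp
  -- the two `Finsupp.linearCombination` maps
  set K : (𝒳 →₀ ℂ) →ₗ[ℂ] Hk := Finsupp.linearCombination ℂ φ with hKdef
  set L : (𝒳 →₀ ℂ) →ₗ[ℂ] HK := Finsupp.linearCombination ℂ Φ with hLdef
  have hgram : ∀ c d : 𝒳 →₀ ℂ, ⟪L c, L d⟫ = ⟪K c, K d⟫ := by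
    intro c d
    induction c using Finsupp.induction_linear with
    | zero => simp
    | add f g hf hg => simp [inner_add_left, hf, hg]
    | single a b =>
      induction d using Finsupp.induction_linear with
      | zero => simp
      | add f g hf hg => simp [inner_add_right, hf, hg]
      | single a' b' =>
        simp only [hKdef, hLdef, Finsupp.linearCombination_single,
          inner_smul_left, inner_smul_right, hgramΦ, hφ]
  have hnorm : ∀ c : 𝒳 →₀ ℂ, ‖L c‖ = ‖K c‖ := by
    intro c
    rw [norm_eq_sqrt_re_inner (𝕜 := ℂ), norm_eq_sqrt_re_inner (𝕜 := ℂ), hgram]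
  have hker : LinearMap.ker K ≤ LinearMap.ker L := by
    intro c hc
    rw [LinearMap.mem_ker] at hc ⊢
    have h := hnorm c
    rw [hc, norm_zero] at h
    exact norm_eq_zero.mp h
  -- the isometry on the span, via the quotient
  set f₁ : (LinearMap.range K) →ₗ[ℂ] HK :=
    ((LinearMap.ker K).liftQ L hker).comp K.quotKerEquivRange.symm.toLinearMap with hf₁def
  have hf₁ : ∀ (c : 𝒳 →₀ ℂ) (hv : K c ∈ LinearMap.range K), f₁ ⟨K c, hv⟩ = L c := by
    intro c hv
    have h1 : K.quotKerEquivRange (Submodule.Quotient.mk c) = ⟨K c, hv⟩ :=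
      Subtype.ext (K.quotKerEquivRange_apply_mk c)
    show ((LinearMap.ker K).liftQ L hker) (K.quotKerEquivRange.symm ⟨K c, hv⟩) = L c
    rw [← h1, LinearEquiv.symm_apply_apply]
    exact Submodule.liftQ_apply _ L c
  have hf₁norm : ∀ v : LinearMap.range K, ‖f₁ v‖ = ‖(v : Hk)‖ := by
    rintro ⟨v, hv⟩
    obtain ⟨c, rfl⟩ := hv
    show ‖f₁ ⟨K c, LinearMap.mem_range_self K c⟩‖ = ‖K c‖
    rw [hf₁ c]
    exact hnorm c
  set F : (LinearMap.range K) →L[ℂ] HK :=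
    f₁.mkContinuous 1 (fun v => by rw [hf₁norm v, one_mul]; exact le_rfl) with hFdef
  have hdense : Dense ((Submodule.span ℂ (Set.range φ) : Submodule ℂ Hk) : Set Hk) :=
    Submodule.dense_iff_topologicalClosure_eq_top.mpr hφdense
  have hrange : LinearMap.range K = Submodule.span ℂ (Set.range φ) := by
    rw [hKdef]; exact Finsupp.range_linearCombination ℂ (v := φ)
  have hdenseK : Dense ((LinearMap.range K : Submodule ℂ Hk) : Set Hk) := by
    rw [hrange]; exact hdense
  have hdr : DenseRange ((LinearMap.range K).subtypeL) := by
    have h1 : Set.range ((LinearMap.range K).subtypeL)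
        = ((LinearMap.range K : Submodule ℂ Hk) : Set Hk) := by
      ext y
      constructor
      · rintro ⟨x, rfl⟩; exact x.2
      · intro hy; exact ⟨⟨y, hy⟩, rfl⟩
    rw [DenseRange, h1]; exact hdenseK
  have hui : IsUniformInducing ((LinearMap.range K).subtypeL) :=
    isometry_subtype_coe.isUniformInducing
  set ι₀ : Hk →L[ℂ] HK := F.extend (LinearMap.range K).subtypeL with hι₀def
  have hι₀ : ∀ v : LinearMap.range K, ι₀ v = F v := fun v =>
    ContinuousLinearMap.extend_eq F hdr hui v
  have hι₀norm : ∀ h : Hk, ‖ι₀ h‖ = ‖h‖ := by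
    intro h
    have hsub : ((LinearMap.range K : Submodule ℂ Hk) : Set Hk) ⊆ {h : Hk | ‖ι₀ h‖ = ‖h‖} := by
      intro v hv
      have h1 : ι₀ v = F ⟨v, hv⟩ := hι₀ ⟨v, hv⟩
      have h2 : ‖F ⟨v, hv⟩‖ = ‖v‖ := hf₁norm ⟨v, hv⟩
      simp only [Set.mem_setOf_eq, h1, h2]
    have hclosed : IsClosed {h : Hk | ‖ι₀ h‖ = ‖h‖} :=
      isClosed_eq ι₀.continuous.norm continuous_norm
    have hmemcl : h ∈ closure ((LinearMap.range K : Submodule ℂ Hk) : Set Hk) := by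
      rw [hdenseK.closure_eq]; trivial
    exact closure_minimal hsub hclosed hmemcl
  set ι : Hk →ₗᵢ[ℂ] HK := ⟨ι₀.toLinearMap, hι₀norm⟩ with hιdef
  have hιK : ∀ c : 𝒳 →₀ ℂ, ι₀ (K c) = L c := by
    intro c
    have hmem : K c ∈ LinearMap.range K := LinearMap.mem_range_self K c
    have h1 : ι₀ (K c) = F ⟨K c, hmem⟩ := hι₀ ⟨K c, hmem⟩
    rw [h1]
    exact hf₁ c hmem
  have hιx : ∀ x : 𝒳, ι (φ x) = Φ x := by
    intro x
    have h2 : K (Finsupp.single x 1) = φ x := by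
      simp [hKdef, Finsupp.linearCombination_single]
    have h3 : ι (φ x) = ι₀ (φ x) := rfl
    rw [h3, ← h2, hιK]
    simp [hLdef, Finsupp.linearCombination_single]
  have huniq : ∀ ι' : Hk →ₗᵢ[ℂ] HK, (∀ x, ι' (φ x) = Φ x) → ι' = ι := by
    intro ι' hι'
    have hext : ι'.toContinuousLinearMap = ι.toContinuousLinearMap := by
      refine ContinuousLinearMap.ext_on hdense ?_
      rintro _ ⟨x, rfl⟩
      simp only [LinearIsometry.coe_toContinuousLinearMap]
      rw [hι' x, hιx x]
    ext h
    have := DFunLike.congr_fun hext h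
    simpa using this
  -- bound and continuity of `φ`
  have hφnorm : ∀ y, ‖φ y‖ ≤ Real.sqrt C := by
    intro y
    have h1 : ‖φ y‖ = Real.sqrt (RCLike.re (⟪φ y, φ y⟫)) := norm_eq_sqrt_re_inner (𝕜 := ℂ) _
    rw [h1, hφ]
    apply Real.sqrt_le_sqrt
    exact le_trans (Complex.re_le_norm _) (hC y y)
  have hφcont : Continuous φ := by
    rw [continuous_iff_continuousAt]
    intro a
    rw [ContinuousAt, tendsto_iff_norm_sub_tendsto_zero]
    have heq : ∀ b, ‖φ b - φ a‖
        = Real.sqrt (RCLike.re (k b b - k a b - k b a + k a a)) := by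
      intro b
      rw [norm_eq_sqrt_re_inner (𝕜 := ℂ)]
      congr 2
      rw [inner_sub_left, inner_sub_right, inner_sub_right, hφ, hφ, hφ, hφ]
      ring
    simp only [heq]
    have c1 : Continuous fun b : 𝒳 => k b b :=
      hcont.comp (continuous_id.prodMk continuous_id)
    have c2 : Continuous fun b : 𝒳 => k a b :=
      hcont.comp (continuous_const.prodMk continuous_id)
    have c3 : Continuous fun b : 𝒳 => k b a :=
      hcont.comp (continuous_id.prodMk continuous_const)
    have hk : Continuous fun b : 𝒳 =>
        Real.sqrt (RCLike.re (k b b - k a b - k b a + k a a)) :=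
      Real.continuous_sqrt.comp (RCLike.continuous_re.comp
        (((c1.sub c2).sub c3).add continuous_const))
    have := hk.tendsto a
    simpa using this
  -- the adjoint identity for `feat Y`
  have hadj : ∀ (Y : Ω → 𝒳), Measurable Y → ∀ g : HK,
      evK g Y = (ContinuousLinearMap.adjoint (feat Y)) g := by
    intro Y hY g
    refine ext_inner_left ℂ fun f => ?_
    rw [← hrep Y hY f g, ContinuousLinearMap.adjoint_inner_right]
  refine ⟨⟨ι, hιx, fun ι' h' => huniq ι' h'⟩, ?_⟩
  intro ι' hι'x
  -- part (b), first identity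
  have hb : ∀ (g : HK) (x : 𝒳),
      evk ((ContinuousLinearMap.adjoint ι'.toContinuousLinearMap) g) x
        = ∫ ω, (evK g (fun _ => x) : Ω → ℂ) ω ∂P := by
    intro g x
    rw [hevk, ContinuousLinearMap.adjoint_inner_right]
    simp only [LinearIsometry.coe_toContinuousLinearMap]
    rw [hι'x x]
    exact hinner_one _ measurable_const g
  -- part (b), second identity
  have hb2 : ∀ (X : Ω → 𝒳), Measurable X → ∀ (f : Lp ℂ 2 P) (x : 𝒳),
      evk ((ContinuousLinearMap.adjoint ι'.toContinuousLinearMap) (feat X f)) x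
        = ∫ ω, k (X ω) x * f ω ∂P := by
    intro X hX f x
    rw [hb (feat X f) x]
    exact integral_congr_ae (hfeatval (fun _ => x) X measurable_const hX f)
  -- part (a), the evaluation formula
  have ha2 : ∀ (h : Hk) (X : Ω → 𝒳), Measurable X →
      (evK (ι' h) X : Ω → ℂ) =ᵐ[P] fun ω => evk h (X ω) := by
    intro h X hX
    have hmeas : ∀ h : Hk, AEStronglyMeasurable (fun ω => evk h (X ω)) P := by
      intro h
      have hc : Continuous fun y => evk h y := by
        have : (fun y => evk h y) = fun y => ⟪φ y, h⟫ := funext fun y => hevk h y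
        rw [this]
        exact Continuous.inner hφcont continuous_const
      exact (hc.measurable.comp hX).aestronglyMeasurable
    have hbd : ∀ (h : Hk) (ω : Ω), ‖evk h (X ω)‖ ≤ Real.sqrt C * ‖h‖ := by
      intro h ω
      rw [hevk]
      calc ‖⟪φ (X ω), h⟫‖ ≤ ‖φ (X ω)‖ * ‖h‖ := norm_inner_le_norm _ _
        _ ≤ Real.sqrt C * ‖h‖ :=
          mul_le_mul_of_nonneg_right (hφnorm _) (norm_nonneg _)
    have hmem : ∀ h : Hk, MemLp (fun ω => evk h (X ω)) 2 P := fun h =>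
      MemLp.of_bound (hmeas h) _ (Filter.Eventually.of_forall (hbd h))
    set S₀ : Hk →ₗ[ℂ] Lp ℂ 2 P :=
      { toFun := fun h => (hmem h).toLp _
        map_add' := by
          intro h h'
          rw [← MemLp.toLp_add (hmem h) (hmem h')]
          apply MemLp.toLp_congr
          apply Filter.Eventually.of_forall
          intro ω
          simp [hevk, inner_add_right]
        map_smul' := by
          intro c h
          show (hmem (c • h)).toLp _ = c • (hmem h).toLp _
          rw [← MemLp.toLp_const_smul c (hmem h)]
          apply MemLp.toLp_congr
          apply Filter.Eventually.of_forall
          intro ω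
          simp [hevk, inner_smul_right] } with hS₀def
    have hScoe : ∀ h : Hk, (S₀ h : Ω → ℂ) =ᵐ[P] fun ω => evk h (X ω) := fun h =>
      MemLp.coeFn_toLp (hmem h)
    have hS₀bound : ∀ h : Hk, ‖S₀ h‖ ≤ Real.sqrt C * ‖h‖ := by
      intro h
      have hb' : ∀ᵐ ω ∂P, ‖(S₀ h : Ω → ℂ) ω‖ ≤ Real.sqrt C * ‖h‖ := by
        filter_upwards [hScoe h] with ω hω
        rw [hω]; exact hbd h ω
      have := Lp.norm_le_of_ae_bound
        (mul_nonneg (Real.sqrt_nonneg _) (norm_nonneg _)) hb'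
      simpa [measureUnivNNReal, measure_univ] using this
    set S : Hk →L[ℂ] Lp ℂ 2 P := S₀.mkContinuous (Real.sqrt C) hS₀bound with hSdef
    set T : Hk →L[ℂ] Lp ℂ 2 P :=
      (ContinuousLinearMap.adjoint (feat X)).comp ι'.toContinuousLinearMap with hTdef
    have hTS : T = S := by
      refine ContinuousLinearMap.ext_on hdense ?_
      rintro _ ⟨y, rfl⟩
      show (ContinuousLinearMap.adjoint (feat X)) (ι'.toContinuousLinearMap (φ y)) = S (φ y)
      have h1 : ι'.toContinuousLinearMap (φ y) = feat (fun _ => y) one := hι'x y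
      rw [h1, ← hadj X hX]
      apply Lp.ext
      have h2 := hfeatval X (fun _ => y) hX measurable_const one
      have h3 : (S (φ y) : Ω → ℂ) =ᵐ[P] fun ω => evk (φ y) (X ω) := hScoe (φ y)
      filter_upwards [h2, h3, hone] with ω hω2 hω3 hω1
      rw [hω2, hω3, hω1, mul_one, hevk, hφ]
    have hfin : evK (ι' h) X = S h := by
      rw [hadj X hX (ι' h)]
      have := DFunLike.congr_fun hTS h
      simpa [hTdef] using this
    have : (evK (ι' h) X : Ω → ℂ) =ᵐ[P] (S h : Ω → ℂ) := by rw [hfin]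
    exact this.trans (hScoe h)
  exact ⟨ha2, hb, hb2⟩
end
end

section
/- Let V be a complex Hilbert space, 𝒳 a set, 𝐤: 𝒳×𝒳 → B(V) a B(V)-valued positive definite kernel with vvRKHS H_𝐤, and f: 𝒳 → 𝒳 a map. Assume that the Perron–Frobenius operator K_f, defined on the dense domain span{𝐤_x v : x ∈ 𝒳, v ∈ V} by K_f(∑_i 𝐤_{x_i} v_i) := ∑_i 𝐤_{f(x_i)} v_i, is a well-defined linear operator on H_𝐤. Let 𝒦_𝐤 be the Koopman (composition) operator on H_𝐤 with domain 𝒟(𝒦_𝐤) := {h ∈ H_𝐤 : h ∘ f ∈ H_𝐤} and 𝒦_𝐤 h := h ∘ f. Then the adjoint of K_f equals 𝒦_𝐤 as unbounded operators: 𝒟((K_f)^*) = 𝒟(𝒦_𝐤) and (K_f)^* h = h ∘ f for every h ∈ 𝒟(𝒦_𝐤). -/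
open scoped ComplexOrder BigOperators

noncomputable section

local notation "⟪" x ", " y "⟫" => @inner ℂ _ _ x y

/-- Let `𝐤 : 𝒳×𝒳 → B(V)` be a `B(V)`-valued positive definite kernel
with vvRKHS `H_𝐤` (modeled by feature maps `feat`, an evaluation `ev`, and the
reproducing identity `⟨𝐤_x v, h⟩ = ⟨v, h(x)⟩`), and `f : 𝒳 → 𝒳` a map.  Assume the
Perron–Frobenius operator `K_f` — the densely defined operator with domain
`span{𝐤_x v}` determined by `K_f(𝐤_x v) = 𝐤_{f(x)} v` — is well defined (given here
as a `LinearPMap`).  Then the adjoint of `K_f` is the Koopman operator: its domain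
is `{h ∈ H_𝐤 : h ∘ f ∈ H_𝐤}` and `(K_f)^* h = h ∘ f` there. -/
theorem statement18
    {V : Type*} [NormedAddCommGroup V] [InnerProductSpace ℂ V] [CompleteSpace V]
    {𝒳 : Type*} (K : 𝒳 → 𝒳 → (V →L[ℂ] V))
    (hherm : ∀ x y, K x y = ContinuousLinearMap.adjoint (K y x))
    (hpos : ∀ (n : ℕ) (x : Fin n → 𝒳) (v : Fin n → V),
      0 ≤ ∑ i, ∑ j, ⟪v j, (K (x i) (x j)) (v i)⟫)
    -- the vvRKHS `H_𝐤`, with feature maps, evaluation, and reproducing property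
    {HK : Type*} [NormedAddCommGroup HK] [InnerProductSpace ℂ HK] [CompleteSpace HK]
    (feat : 𝒳 → V →L[ℂ] HK)
    (ev : HK →ₗ[ℂ] (𝒳 → V))
    (hrep : ∀ (x : 𝒳) (v : V) (h : HK), ⟪feat x v, h⟫ = ⟪v, ev h x⟫)
    (hfeatval : ∀ (y : 𝒳) (w : V), ev (feat y w) = fun x => (K y x) w)
    (f : 𝒳 → 𝒳)
    -- the Perron–Frobenius operator `K_f`, assumed well defined
    (Kf : HK →ₗ.[ℂ] HK)
    (hKdom : Kf.domain = Submodule.span ℂ {g : HK | ∃ (x : 𝒳) (v : V), g = feat x v})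
    (hKval : ∀ (x : 𝒳) (v : V) (hm : feat x v ∈ Kf.domain),
      Kf ⟨feat x v, hm⟩ = feat (f x) v)
    (hdense : Dense (Kf.domain : Set HK)) :
    -- the adjoint of `K_f` is the Koopman operator `h ↦ h ∘ f`
    (∀ h : HK,
      h ∈ Kf.adjoint.domain ↔ ∃ g : HK, ev g = fun x => ev h (f x)) ∧
    (∀ (h : HK) (hm : h ∈ Kf.adjoint.domain),
      ev (Kf.adjoint ⟨h, hm⟩) = fun x => ev h (f x)) := by
  have hfeatmem : ∀ (x : 𝒳) (v : V), feat x v ∈ Kf.domain := by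
    intro x v
    rw [hKdom]
    exact Submodule.subset_span ⟨x, v, rfl⟩
  -- key inner product computation for elements of the domain
  have key : ∀ (g h : HK), (ev g = fun x => ev h (f x)) →
      ∀ (u : HK), u ∈ Submodule.span ℂ {g : HK | ∃ (x : 𝒳) (v : V), g = feat x v} →
      ∀ (hu : u ∈ Kf.domain), ⟪g, u⟫ = ⟪h, Kf ⟨u, hu⟩⟫ := by
    intro g h hg u hspan
    induction hspan using Submodule.span_induction with
    | mem w hw =>
        intro hu
        obtain ⟨x, v, rfl⟩ := hw
        rw [hKval x v hu]
        have hgx : ev g x = ev h (f x) := congrFun hg x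
        calc ⟪g, feat x v⟫ = starRingEnd ℂ ⟪feat x v, g⟫ := (inner_conj_symm _ _).symm
          _ = starRingEnd ℂ ⟪v, ev g x⟫ := by rw [hrep]
          _ = starRingEnd ℂ ⟪v, ev h (f x)⟫ := by rw [hgx]
          _ = starRingEnd ℂ ⟪feat (f x) v, h⟫ := by rw [hrep]
          _ = ⟪h, feat (f x) v⟫ := inner_conj_symm _ _
    | zero =>
        intro hu
        have h0 : (⟨(0 : HK), hu⟩ : Kf.domain) = 0 := rfl
        rw [h0, LinearPMap.map_zero, inner_zero_right, inner_zero_right]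
    | add a b ha hb iha ihb =>
        intro hu
        have haD : a ∈ Kf.domain := by rw [hKdom]; exact ha
        have hbD : b ∈ Kf.domain := by rw [hKdom]; exact hb
        have hsum : (⟨a + b, hu⟩ : Kf.domain) = ⟨a, haD⟩ + ⟨b, hbD⟩ := rfl
        rw [hsum, LinearPMap.map_add, inner_add_right, inner_add_right,
          iha haD, ihb hbD]
    | smul c a ha iha =>
        intro hu
        have haD : a ∈ Kf.domain := by rw [hKdom]; exact ha
        have hsmul : (⟨c • a, hu⟩ : Kf.domain) = c • ⟨a, haD⟩ := rfl
        rw [hsmul, LinearPMap.map_smul, inner_smul_right, inner_smul_right, iha haD]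
  -- values of the adjoint
  have hval : ∀ (h : HK) (hm : h ∈ Kf.adjoint.domain),
      ev (Kf.adjoint ⟨h, hm⟩) = fun x => ev h (f x) := by
    intro h hm
    funext x
    apply ext_inner_left ℂ
    intro v
    have hform := LinearPMap.adjoint_isFormalAdjoint hdense (T := Kf)
      ⟨h, hm⟩ ⟨feat x v, hfeatmem x v⟩
    have : ⟪Kf.adjoint ⟨h, hm⟩, feat x v⟫ = ⟪h, feat (f x) v⟫ := by
      rw [hform, hKval x v (hfeatmem x v)]
    calc ⟪v, ev (Kf.adjoint ⟨h, hm⟩) x⟫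
        = ⟪feat x v, Kf.adjoint ⟨h, hm⟩⟫ := (hrep _ _ _).symm
      _ = starRingEnd ℂ ⟪Kf.adjoint ⟨h, hm⟩, feat x v⟫ := (inner_conj_symm _ _).symm
      _ = starRingEnd ℂ ⟪h, feat (f x) v⟫ := by rw [this]
      _ = ⟪feat (f x) v, h⟫ := inner_conj_symm _ _
      _ = ⟪v, ev h (f x)⟫ := hrep _ _ _
  refine ⟨fun h => ⟨fun hm => ⟨Kf.adjoint ⟨h, hm⟩, hval h hm⟩, ?_⟩, hval⟩
  rintro ⟨g, hg⟩
  exact LinearPMap.mem_adjoint_domain_of_exists h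
    ⟨g, fun u => key g h hg u (by rw [← hKdom]; exact u.2) u.2⟩
end
end
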